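/- arXiv:1601.06014 — 4 statements merged into one kernel-verified Lean document; each statement's English description precedes it below -/
import Mathlib

section
/- Let (X_i)_{i∈ℤ} be a stationary ergodic process over a finite alphabet 𝕏 with entropy rate h. For any ε > 0 and any sequence of sample sizes with 1 ≤ n(k) ≤ 2^{k(h−ε)} and n(k) ≥ k, almost surely limsup_{k→∞} H(k, X_1^{n(k)})/k ≤ h − ε; hence the sample size n(k) ≤ 2^{k(h−ε)} is insufficient for consistent estimation of the entropy rate by the plug-in estimator. -/
set_option linter.unusedSectionVars false


open MeasureTheory Filter Real

variable {𝕏 : Type*} [Fintype 𝕏] [Nonempty 𝕏] [DecidableEq 𝕏]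
  [MeasurableSpace 𝕏] [MeasurableSingletonClass 𝕏]

/-- The left shift on two-sided sequences: `(shift ω) i = ω (i + 1)`. -/
def shift (ω : ℤ → 𝕏) : ℤ → 𝕏 := fun i => ω (i + 1)

/-- The block `X_{s+1}^{s+l}` of a sequence `ω`, as a tuple in `𝕏^l`. -/
def blk (s l : ℕ) (ω : ℤ → 𝕏) : Fin l → 𝕏 := fun i => ω ((s : ℤ) + 1 + (i : ℤ))

/-- Shannon entropy (base 2) of a distribution `p` on a finite set:
`H(p) = -∑_{w : p w > 0} p w * log₂ (p w)` (`logb 2 0 = 0`, so zero-mass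
points contribute nothing). -/
noncomputable def Hent {A : Type*} [Fintype A] (p : A → ℝ) : ℝ :=
  -∑ w, p w * Real.logb 2 (p w)

/-- Empirical nonoverlapping-block distribution
`p_k(w, x_1^n) = ⌊n/k⌋⁻¹ ∑_{i=1}^{⌊n/k⌋} 1[x_{(i-1)k+1}^{ik} = w]`. -/
noncomputable def empDist (k n : ℕ) (ω : ℤ → 𝕏) : (Fin k → 𝕏) → ℝ :=
  fun w => (∑ i ∈ Finset.range (n / k), if blk (i * k) k ω = w then (1 : ℝ) else 0) / (n / k : ℕ)

/-- Plug-in estimator `H(k, x_1^n)` of the block entropy. -/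
noncomputable def plugIn (k n : ℕ) (ω : ℤ → 𝕏) : ℝ := Hent (empDist k n ω)

/-- True block distribution `p_k(w) = P(X_1^k = w)`. -/
noncomputable def pblock (μ : Measure (ℤ → 𝕏)) (k : ℕ) : (Fin k → 𝕏) → ℝ :=
  fun w => (μ {ω | blk 0 k ω = w}).toReal

/-- Block entropy `H(k) = H(p_k)`. -/
noncomputable def Hblock (μ : Measure (ℤ → 𝕏)) (k : ℕ) : ℝ := Hent (pblock μ k)

/-- Number `D(k, x_1^n)` of distinct nonoverlapping `k`-blocks in `x_1^n`. -/
noncomputable def Dcount (k n : ℕ) (ω : ℤ → 𝕏) : ℕ :=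
  Set.ncard {w : Fin k → 𝕏 | ∃ i < n / k, blk (i * k) k ω = w}

/-- Length bound `K(k, x_1^n)` of the modified `k`-block code:
`K(k,x_1^n) = 2 log₂ k + (n/k)(H(k,x_1^n) + 2) + 3 k log₂|𝕏| (D(k,x_1^n) + 1)`. -/
noncomputable def Kcode (k n : ℕ) (ω : ℤ → 𝕏) : ℝ :=
  2 * Real.logb 2 k + ((n : ℝ) / k) * (plugIn k n ω + 2)
    + 3 * k * Real.logb 2 (Fintype.card 𝕏) * (Dcount k n ω + 1)

/-- Conditional probability `P(X_1^k = w | ℐ)` given the shift-invariant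
σ-algebra `ℐ`, as a function of the sample point. -/
noncomputable def condP (μ : Measure (ℤ → 𝕏)) (k : ℕ) (w : Fin k → 𝕏) : (ℤ → 𝕏) → ℝ :=
  μ[Set.indicator {ω | blk 0 k ω = w} (fun _ => (1 : ℝ)) | MeasurableSpace.invariants shift]

/-- Conditional block entropy `H(X_1^k | ℐ) = E[-log₂ P(X_1^k = w | ℐ)|_{w = X_1^k}]`. -/
noncomputable def condH (μ : Measure (ℤ → 𝕏)) (k : ℕ) : ℝ :=
  ∫ ω, -Real.logb 2 (condP μ k (blk 0 k ω) ω) ∂μ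

/-- `σ(y) = min(2^y, 1)`. -/
noncomputable def sigmaFn (y : ℝ) : ℝ := min ((2 : ℝ) ^ y) 1

/-- Negative part `x⁻ = -x · 1[x < 0]`. -/
noncomputable def nPart (x : ℝ) : ℝ := if x < 0 then -x else 0

section aux
variable {𝕏 : Type*} [Fintype 𝕏] [Nonempty 𝕏] [DecidableEq 𝕏]
  [MeasurableSpace 𝕏] [MeasurableSingletonClass 𝕏]

lemma empDist_nonneg (k n : ℕ) (ω : ℤ → 𝕏) (w : Fin k → 𝕏) : 0 ≤ empDist k n ω w := by
  unfold empDist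
  apply div_nonneg _ (by positivity)
  exact Finset.sum_nonneg fun i _ => by split <;> norm_num

lemma empDist_le_one (k n : ℕ) (ω : ℤ → 𝕏) (w : Fin k → 𝕏) : empDist k n ω w ≤ 1 := by
  unfold empDist
  rcases Nat.eq_zero_or_pos (n / k) with hM | hM
  · simp [hM]
  · rw [div_le_one (by exact_mod_cast hM)]
    calc ∑ i ∈ Finset.range (n / k), (if blk (i * k) k ω = w then (1 : ℝ) else 0)
        ≤ ∑ _i ∈ Finset.range (n / k), (1 : ℝ) :=
          Finset.sum_le_sum fun i _ => by split <;> norm_num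
      _ = ((n / k : ℕ) : ℝ) := by simp

lemma sum_empDist (k n : ℕ) (ω : ℤ → 𝕏) (hM : 0 < n / k) :
    ∑ w, empDist k n ω w = 1 := by
  unfold empDist
  rw [← Finset.sum_div, Finset.sum_comm]
  have h1 : ∀ i ∈ Finset.range (n / k),
      (∑ w : Fin k → 𝕏, if blk (i * k) k ω = w then (1 : ℝ) else 0) = 1 := by
    intro i _
    rw [Finset.sum_ite_eq]
    simp
  rw [Finset.sum_congr rfl h1, Finset.sum_const, Finset.card_range, nsmul_eq_mul, mul_one]
  have : ((n / k : ℕ) : ℝ) ≠ 0 := by exact_mod_cast hM.ne'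
  field_simp

lemma empDist_ge (k n : ℕ) (ω : ℤ → 𝕏) (w : Fin k → 𝕏) (hM : 0 < n / k)
    (hw : empDist k n ω w ≠ 0) : 1 / ((n / k : ℕ) : ℝ) ≤ empDist k n ω w := by
  unfold empDist at *
  have hMpos : (0 : ℝ) < ((n / k : ℕ) : ℝ) := by exact_mod_cast hM
  have hSne : (∑ i ∈ Finset.range (n / k), if blk (i * k) k ω = w then (1 : ℝ) else 0) ≠ 0 := by
    intro h0; exact hw (by rw [h0, zero_div])
  obtain ⟨i, hi, hine⟩ := Finset.exists_ne_zero_of_sum_ne_zero hSne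
  have hterm : (if blk (i * k) k ω = w then (1 : ℝ) else 0) = 1 := by
    split at hine <;> simp_all
  have hS : (1 : ℝ) ≤ ∑ i ∈ Finset.range (n / k), if blk (i * k) k ω = w then (1 : ℝ) else 0 := by
    calc (1 : ℝ) = if blk (i * k) k ω = w then (1 : ℝ) else 0 := hterm.symm
      _ ≤ _ := Finset.single_le_sum (f := fun j => if blk (j * k) k ω = w then (1 : ℝ) else 0) (fun j _ => by split <;> norm_num) hi
  gcongr

lemma Hent_le_logb {A : Type*} [Fintype A] (p : A → ℝ) (M : ℝ) (hM : 1 ≤ M)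
    (h0 : ∀ w, 0 ≤ p w) (hge : ∀ w, p w ≠ 0 → 1 / M ≤ p w) (hsum : ∑ w, p w = 1) :
    Hent p ≤ Real.logb 2 M := by
  have hMpos : (0 : ℝ) < M := lt_of_lt_of_le one_pos hM
  have key : ∀ w, -(p w * Real.logb 2 (p w)) ≤ p w * Real.logb 2 M := by
    intro w
    rcases eq_or_ne (p w) 0 with hz | hz
    · simp [hz]
    · have hp : 0 < p w := (h0 w).lt_of_ne (Ne.symm hz)
      have h1 : Real.logb 2 M⁻¹ ≤ Real.logb 2 (p w) := by
        rw [Real.logb_le_logb (by norm_num) (by positivity) hp]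
        rw [← one_div]; exact hge w hz
      rw [Real.logb_inv] at h1
      have h2 : -Real.logb 2 (p w) ≤ Real.logb 2 M := by linarith
      calc -(p w * Real.logb 2 (p w)) = p w * (-Real.logb 2 (p w)) := by ring
        _ ≤ p w * Real.logb 2 M := by
            exact mul_le_mul_of_nonneg_left h2 hp.le
  calc Hent p = ∑ w, -(p w * Real.logb 2 (p w)) := by
        unfold Hent; rw [← Finset.sum_neg_distrib]
    _ ≤ ∑ w, p w * Real.logb 2 M := Finset.sum_le_sum fun w _ => key w
    _ = Real.logb 2 M := by rw [← Finset.sum_mul, hsum, one_mul]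

lemma plugIn_nonneg (k n : ℕ) (ω : ℤ → 𝕏) : 0 ≤ plugIn k n ω := by
  unfold plugIn Hent
  rw [neg_nonneg]
  apply Finset.sum_nonpos
  intro w _
  have h0 := empDist_nonneg k n ω w
  have h1 := empDist_le_one k n ω w
  exact mul_nonpos_of_nonneg_of_nonpos h0
    (Real.logb_nonpos (by norm_num) h0 h1)
end aux

/-- Too-short samples fail: for a stationary ergodic process with entropy rate
`h`, any `ε > 0` and sample sizes with `1 ≤ n(k) ≤ 2^{k(h−ε)}` and `n(k) ≥ k`,
almost surely `limsup_{k→∞} H(k, X_1^{n(k)})/k ≤ h − ε`. -/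


theorem plugIn_rate_limsup_le_of_short_sample
    {μ : Measure (ℤ → 𝕏)} [IsProbabilityMeasure μ]
    (herg : Ergodic shift μ) (h : ℝ)
    (hrate : Tendsto (fun k => Hblock μ k / k) atTop (nhds h))
    (ε : ℝ) (hε : 0 < ε) (n : ℕ → ℕ)
    (hn1 : ∀ k, 1 ≤ n k) (hnk : ∀ k, k ≤ n k)
    (hn : ∀ k, (n k : ℝ) ≤ (2 : ℝ) ^ ((k : ℝ) * (h - ε))) :
    ∀ᵐ ω ∂μ,
      Filter.limsup (fun k => plugIn k (n k) ω / k) atTop ≤ h - ε := by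
  refine MeasureTheory.ae_of_all μ fun ω => ?_
  apply Filter.limsup_le_of_le
  · exact Filter.isCoboundedUnder_le_of_le atTop
      (x := 0) fun k => div_nonneg (plugIn_nonneg _ _ _) (Nat.cast_nonneg _)
  · filter_upwards [Filter.eventually_ge_atTop 1] with k hk
    have hk0 : (0 : ℝ) < (k : ℝ) := by exact_mod_cast hk
    have hMnat : 1 ≤ n k / k := (Nat.one_le_div_iff (by omega)).2 (hnk k)
    have hMpos : 0 < n k / k := hMnat
    have hM1 : (1 : ℝ) ≤ ((n k / k : ℕ) : ℝ) := by exact_mod_cast hMnat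
    have hple : plugIn k (n k) ω ≤ Real.logb 2 ((n k / k : ℕ) : ℝ) := by
      apply Hent_le_logb _ _ hM1 (empDist_nonneg k (n k) ω)
        (fun w hw => empDist_ge k (n k) ω w hMpos hw)
        (sum_empDist k (n k) ω hMpos)
    have hle2 : Real.logb 2 ((n k / k : ℕ) : ℝ) ≤ Real.logb 2 (n k) := by
      apply Real.logb_le_logb_of_le (by norm_num) (by exact_mod_cast hMpos)
      exact_mod_cast Nat.div_le_self (n k) k
    have hle3 : Real.logb 2 (n k) ≤ (k : ℝ) * (h - ε) := by
      have := Real.logb_le_logb_of_le (b := 2) (by norm_num)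
        (by exact_mod_cast hn1 k) (hn k)
      rwa [Real.logb_rpow (by norm_num) (by norm_num)] at this
    rw [div_le_iff₀ hk0]
    calc plugIn k (n k) ω ≤ (k : ℝ) * (h - ε) := by linarith
      _ = (h - ε) * (k : ℝ) := by ring
end

section
/- For every stationary process (X_i)_{i∈ℤ} over a finite alphabet 𝕏 and all positive integers k ≤ n, the modified k-block code length bound satisfies the source coding inequality E[K(k, X_1^n)] ≥ H(X_1^n), where H(X_1^n) is the Shannon entropy of the block X_1^n. -/
open MeasureTheory Filter Real

variable {𝕏 : Type*} [Fintype 𝕏] [Nonempty 𝕏] [DecidableEq 𝕏]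
  [MeasurableSpace 𝕏] [MeasurableSingletonClass 𝕏]

set_option linter.unusedSectionVars false
set_option linter.unusedVariables false
set_option maxHeartbeats 1000000

namespace SourceCoding

/-- The `i`-th nonoverlapping `k`-block of a finite word `y : Fin n → 𝕏`. -/
noncomputable def blockOf (k n : ℕ) (i : ℕ) (y : Fin n → 𝕏) : Fin k → 𝕏 :=
  fun j => if h : i * k + (j : ℕ) < n then y ⟨i * k + j, h⟩ else Classical.arbitrary 𝕏

/-- Count of occurrences of the block `w` among the first `n/k` nonoverlapping blocks. -/
noncomputable def cnt (k n : ℕ) (y : Fin n → 𝕏) (w : Fin k → 𝕏) : ℕ :=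
  ((Finset.range (n / k)).filter (fun i => blockOf k n i y = w)).card

noncomputable def empDistF (k n : ℕ) (y : Fin n → 𝕏) : (Fin k → 𝕏) → ℝ :=
  fun w => (∑ i ∈ Finset.range (n / k), if blockOf k n i y = w then (1 : ℝ) else 0) / (n / k : ℕ)

noncomputable def DF (k n : ℕ) (y : Fin n → 𝕏) : ℕ :=
  (Finset.univ.filter (fun w : Fin k → 𝕏 => cnt k n y w ≠ 0)).card

noncomputable def KF (k n : ℕ) (y : Fin n → 𝕏) : ℝ :=
  2 * Real.logb 2 k + ((n : ℝ) / k) * (Hent (empDistF k n y) + 2)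
    + 3 * k * Real.logb 2 (Fintype.card 𝕏) * (DF k n y + 1)

lemma blk_eq_blockOf {k n : ℕ} (ω : ℤ → 𝕏) {i : ℕ} (hi : i < n / k) :
    blk (i * k) k ω = blockOf k n i (blk 0 n ω) := by
  funext j
  have hik : i * k + (j : ℕ) < n := by
    have h1 : (i + 1) * k ≤ (n / k) * k := Nat.mul_le_mul_right k hi
    have h2 : (n / k) * k ≤ n := Nat.div_mul_le_self n k
    have := j.isLt
    nlinarith [j.isLt]
  simp only [blockOf, blk, hik, dif_pos]
  congr 1
  push_cast
  ring

lemma empDist_eq (k n : ℕ) (ω : ℤ → 𝕏) : empDist k n ω = empDistF k n (blk 0 n ω) := by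
  funext w
  unfold empDist empDistF
  congr 1
  refine Finset.sum_congr rfl fun i hi => ?_
  rw [blk_eq_blockOf ω (Finset.mem_range.mp hi)]

lemma Dcount_eq (k n : ℕ) (ω : ℤ → 𝕏) : Dcount k n ω = DF k n (blk 0 n ω) := by
  unfold Dcount DF
  have : {w : Fin k → 𝕏 | ∃ i < n / k, blk (i * k) k ω = w}
      = ↑(Finset.univ.filter (fun w : Fin k → 𝕏 => cnt k n (blk 0 n ω) w ≠ 0)) := by
    ext w
    simp only [Set.mem_setOf_eq, Finset.coe_filter, Finset.mem_univ, true_and, cnt,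
      Finset.card_ne_zero, Finset.filter_nonempty_iff, Finset.mem_range]
    constructor
    · rintro ⟨i, hi, hw⟩
      exact ⟨i, hi, by rw [← blk_eq_blockOf ω hi]; exact hw⟩
    · rintro ⟨i, hi, hw⟩
      exact ⟨i, hi, by rw [blk_eq_blockOf ω hi]; exact hw⟩
  rw [this, Set.ncard_coe_finset]


lemma Kcode_eq (k n : ℕ) (ω : ℤ → 𝕏) : Kcode k n ω = KF k n (blk 0 n ω) := by
  unfold Kcode KF plugIn
  rw [empDist_eq, Dcount_eq]

lemma cnt_le (k n : ℕ) (y : Fin n → 𝕏) (w : Fin k → 𝕏) : cnt k n y w ≤ n / k :=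
  (Finset.card_filter_le _ _).trans_eq (Finset.card_range _)

lemma sum_cnt (k n : ℕ) (y : Fin n → 𝕏) : ∑ w, cnt k n y w = n / k := by
  classical
  rw [← Finset.card_range (n / k)]
  rw [Finset.card_eq_sum_card_fiberwise (f := fun i => blockOf k n i y)
    (t := Finset.univ) (fun i _ => Finset.mem_univ _)]
  rfl

lemma empDistF_eq_cnt (k n : ℕ) (y : Fin n → 𝕏) (w : Fin k → 𝕏) :
    empDistF k n y w = (cnt k n y w : ℝ) / (n / k : ℕ) := by
  unfold empDistF cnt
  rw [Finset.sum_boole]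

lemma empDistF_nonneg (k n : ℕ) (y : Fin n → 𝕏) (w : Fin k → 𝕏) : 0 ≤ empDistF k n y w := by
  rw [empDistF_eq_cnt]; positivity

lemma empDistF_le_one (k n : ℕ) (y : Fin n → 𝕏) (w : Fin k → 𝕏) : empDistF k n y w ≤ 1 := by
  rw [empDistF_eq_cnt]
  rcases Nat.eq_zero_or_pos (n / k) with h | h
  · simp [h]
  · rw [div_le_one (by exact_mod_cast h)]
    exact_mod_cast cnt_le k n y w

lemma Hent_nonneg {A : Type*} [Fintype A] {p : A → ℝ} (h0 : ∀ w, 0 ≤ p w)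
    (h1 : ∀ w, p w ≤ 1) : 0 ≤ Hent p := by
  unfold Hent
  rw [neg_nonneg]
  refine Finset.sum_nonpos fun w _ => ?_
  rcases eq_or_lt_of_le (h0 w) with h | h
  · simp [← h]
  · exact mul_nonpos_of_nonneg_of_nonpos (h0 w)
      (Real.logb_nonpos (by norm_num) (h0 w) (h1 w))


/-- Gibbs / Kraft source-coding bound: if `∑ 2^(-F) ≤ 1` and `p` is a probability
vector then `H(p) ≤ ∑ p F`. -/
lemma Hent_le_of_kraft {A : Type*} [Fintype A] (p F : A → ℝ) (hp0 : ∀ x, 0 ≤ p x)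
    (hp1 : ∑ x, p x = 1) (hF : ∑ x, (2 : ℝ) ^ (-F x) ≤ 1) :
    Hent p ≤ ∑ x, p x * F x := by
  set q : A → ℝ := fun x => (2 : ℝ) ^ (-F x) with hq
  have hq0 : ∀ x, 0 < q x := fun x => Real.rpow_pos_of_pos (by norm_num) _
  have hlog2 : (0 : ℝ) < Real.log 2 := Real.log_pos (by norm_num)
  have key : ∀ x, -(p x * Real.logb 2 (p x)) - p x * F x ≤ (q x - p x) / Real.log 2 := by
    intro x
    rcases eq_or_lt_of_le (hp0 x) with h | h
    · rw [← h]
      simp only [zero_mul, neg_zero, sub_zero, zero_sub, neg_zero, sub_zero]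
      positivity
    · have hFx : F x = -Real.logb 2 (q x) := by
        rw [hq]; simp [Real.logb_rpow (by norm_num : (0:ℝ) < 2) (by norm_num)]
      rw [hFx]
      have hlb : Real.log (q x / p x) ≤ q x / p x - 1 :=
        Real.log_le_sub_one_of_pos (div_pos (hq0 x) h)
      have : -(p x * Real.logb 2 (p x)) - p x * -Real.logb 2 (q x)
          = p x * (Real.log (q x / p x)) / Real.log 2 := by
        rw [Real.log_div (hq0 x).ne' h.ne']
        unfold Real.logb
        field_simp
        ring
      rw [this]
      rw [div_le_div_iff_of_pos_right hlog2]
      calc p x * Real.log (q x / p x) ≤ p x * (q x / p x - 1) := by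
            exact mul_le_mul_of_nonneg_left hlb (hp0 x)
        _ = q x - p x := by field_simp
  have hsum : Hent p - ∑ x, p x * F x ≤ 0 := by
    have h1 : Hent p - ∑ x, p x * F x = ∑ x, (-(p x * Real.logb 2 (p x)) - p x * F x) := by
      unfold Hent
      rw [Finset.sum_sub_distrib, ← Finset.sum_neg_distrib]
    rw [h1]
    calc ∑ x, (-(p x * Real.logb 2 (p x)) - p x * F x)
        ≤ ∑ x, (q x - p x) / Real.log 2 := Finset.sum_le_sum fun x _ => key x
      _ = ((∑ x, q x) - ∑ x, p x) / Real.log 2 := by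
          rw [← Finset.sum_div, Finset.sum_sub_distrib]
      _ ≤ 0 := by
          apply div_nonpos_of_nonpos_of_nonneg _ hlog2.le
          rw [hp1, sub_nonpos]
          exact hF
  linarith


lemma rpow_sum' {A : Type*} (s : Finset A) (f : A → ℝ) :
    (2 : ℝ) ^ (∑ x ∈ s, f x) = ∏ x ∈ s, (2 : ℝ) ^ (f x) := by
  classical
  induction s using Finset.cons_induction with
  | empty => simp
  | cons a s ha ih =>
      rw [Finset.sum_cons, Finset.prod_cons, Real.rpow_add (by norm_num), ih]

/-- The key "type" identity: `2 ^ (-m·H(p̂)) = ∏_{i<m} p̂(B_i)`. -/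
lemma rpow_neg_mul_hent (k n : ℕ) (y : Fin n → 𝕏) :
    (2 : ℝ) ^ (-(((n / k : ℕ) : ℝ) * Hent (empDistF k n y)))
      = ∏ i ∈ Finset.range (n / k), empDistF k n y (blockOf k n i y) := by
  classical
  set m := n / k with hm
  set c := cnt k n y with hc
  have hmR : ((m : ℕ) : ℝ) ≠ 0 ∨ True := Or.inr trivial
  have he : -(((m : ℕ) : ℝ) * Hent (empDistF k n y))
      = ∑ w, (c w : ℝ) * Real.logb 2 ((c w : ℝ) / (m : ℕ)) := by
    unfold Hent
    rw [mul_neg, neg_neg, Finset.mul_sum]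
    refine Finset.sum_congr rfl fun w _ => ?_
    rw [empDistF_eq_cnt]
    rcases Nat.eq_zero_or_pos m with h0 | h0
    · simp [← hm, h0]
    · have : ((m : ℕ) : ℝ) ≠ 0 := by exact_mod_cast h0.ne'
      rw [← mul_assoc, mul_div_cancel₀ _ this]
  rw [he, rpow_sum']
  have hterm : ∀ w : Fin k → 𝕏,
      (2 : ℝ) ^ ((c w : ℝ) * Real.logb 2 ((c w : ℝ) / (m : ℕ)))
        = ((c w : ℝ) / (m : ℕ)) ^ (c w) := by
    intro w
    rcases Nat.eq_zero_or_pos (c w) with h0 | h0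
    · simp [h0]
    · have ht : (0 : ℝ) < (c w : ℝ) / (m : ℕ) := by
        have hmpos : 0 < m := lt_of_lt_of_le h0 (hc ▸ cnt_le k n y w)
        positivity
      rw [mul_comm, Real.rpow_mul (by norm_num : (0:ℝ) ≤ 2),
        Real.rpow_logb (by norm_num) (by norm_num) ht, Real.rpow_natCast]
  rw [Finset.prod_congr rfl fun w _ => hterm w]
  -- now turn the RHS product over blocks into a product over values
  rw [Finset.prod_comp (empDistF k n y) (fun i => blockOf k n i y)]
  rw [← Finset.prod_subset (Finset.subset_univ
    ((Finset.range m).image (fun i => blockOf k n i y)))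
    (fun w _ hw => ?_)]
  · refine (Finset.prod_congr rfl fun w _ => ?_).symm
    rw [empDistF_eq_cnt k n y w]
    rfl
  · -- w not in the image: cnt = 0
    have h0 : c w = 0 := by
      rw [hc]
      unfold cnt
      rw [Finset.card_eq_zero, Finset.filter_eq_empty_iff]
      intro i hi hne
      exact hw (Finset.mem_image.mpr ⟨i, hi, hne⟩)
    rw [h0]
    simp


/-- The weight `2^(-3k log₂|𝕏|)` used in the Kraft sum. -/
noncomputable def rr (X k : ℕ) : ℝ := (2 : ℝ) ^ (-(3 * (k : ℝ) * Real.logb 2 X))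

noncomputable def phi (X k : ℕ) (j : ℕ) : ℝ :=
  (if j = 0 then 1 else rr X k) * (1 / 4 : ℝ) ^ j

lemma rr_pos (X k : ℕ) : 0 < rr X k := Real.rpow_pos_of_pos (by norm_num) _

lemma phi_nonneg (X k : ℕ) (j : ℕ) : 0 ≤ phi X k j := by
  unfold phi
  have := (rr_pos X k).le
  positivity

lemma rpow_neg_KF_le (k n : ℕ) (hk : 0 < k) (y : Fin n → 𝕏) :
    (2 : ℝ) ^ (-(KF k n y)) ≤ rr (Fintype.card 𝕏) k *
      ((∏ i ∈ Finset.range (n / k), empDistF k n y (blockOf k n i y)) *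
        ∏ w, phi (Fintype.card 𝕏) k (cnt k n y w)) := by
  classical
  set X := Fintype.card 𝕏 with hX
  set m := n / k with hm
  set L := Real.logb 2 X with hLdef
  set H := Hent (empDistF k n y) with hHdef
  set D := DF k n y with hDdef
  have hL : 0 ≤ L := Real.logb_nonneg (by norm_num)
    (by exact_mod_cast Fintype.card_pos (α := 𝕏))
  have hH0 : 0 ≤ H := Hent_nonneg (empDistF_nonneg k n y) (empDistF_le_one k n y)
  have step1 : (2 : ℝ) ^ (-(KF k n y))
      ≤ (2 : ℝ) ^ (-((m : ℝ) * H + 2 * (m : ℝ) + (3 * (k:ℝ) * L * (D:ℝ) + 3 * (k:ℝ) * L))) := by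
    apply Real.rpow_le_rpow_of_exponent_le one_le_two
    have h2l : 0 ≤ 2 * Real.logb 2 k := by
      have : (0:ℝ) ≤ Real.logb 2 k := Real.logb_nonneg (by norm_num) (by exact_mod_cast hk)
      linarith
    have hmn : ((m : ℕ) : ℝ) ≤ (n : ℝ) / k := Nat.cast_div_le
    have key : (m : ℝ) * (H + 2) ≤ ((n : ℝ) / k) * (H + 2) :=
      mul_le_mul_of_nonneg_right hmn (by linarith)
    unfold KF
    nlinarith [key, h2l]
  have hsplit : (2:ℝ) ^ (-((m : ℝ) * H + 2 * (m : ℝ) + (3 * (k:ℝ) * L * (D:ℝ) + 3 * (k:ℝ) * L)))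
      = (2:ℝ) ^ (-((m:ℝ) * H)) * (2:ℝ) ^ (-(2 * (m:ℝ))) * (2:ℝ) ^ (-(3 * (k:ℝ) * L * (D:ℝ)))
        * (2:ℝ) ^ (-(3 * (k:ℝ) * L)) := by
    rw [show -((m : ℝ) * H + 2 * (m : ℝ) + (3 * (k:ℝ) * L * (D:ℝ) + 3 * (k:ℝ) * L))
        = -((m:ℝ) * H) + -(2 * (m:ℝ)) + -(3 * (k:ℝ) * L * (D:ℝ)) + -(3 * (k:ℝ) * L) by ring]
    rw [Real.rpow_add (by norm_num : (0:ℝ) < 2), Real.rpow_add (by norm_num : (0:ℝ) < 2),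
      Real.rpow_add (by norm_num : (0:ℝ) < 2)]
  have h2m : (2:ℝ) ^ (-(2 * (m:ℝ))) = (1/4 : ℝ) ^ m := by
    rw [show -(2 * (m:ℝ)) = (-2 : ℝ) * (m:ℝ) by ring,
      Real.rpow_mul (by norm_num : (0:ℝ) ≤ 2), Real.rpow_natCast]
    norm_num [show ((-2):ℝ) = -((2:ℕ):ℝ) by norm_num, Real.rpow_neg, Real.rpow_natCast]
  have hDterm : (2:ℝ) ^ (-(3 * (k:ℝ) * L * (D:ℝ))) = (rr X k) ^ (D : ℕ) := by
    rw [show -(3 * (k:ℝ) * L * (D:ℝ)) = (-(3 * (k:ℝ) * L)) * (D:ℝ) by ring,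
      Real.rpow_mul (by norm_num : (0:ℝ) ≤ 2), Real.rpow_natCast]
    rfl
  have hent := rpow_neg_mul_hent k n y
  have hprod : ∏ w, phi X k (cnt k n y w) = (rr X k) ^ (D:ℕ) * (1/4 : ℝ) ^ m := by
    unfold phi
    rw [Finset.prod_mul_distrib]
    congr 1
    · rw [Finset.prod_ite]
      simp only [Finset.prod_const_one, Finset.prod_const, one_mul]
      rfl
    · rw [Finset.prod_pow_eq_pow_sum, sum_cnt, hm]
  calc (2 : ℝ) ^ (-(KF k n y))
      ≤ (2:ℝ) ^ (-((m : ℝ) * H + 2 * (m : ℝ) + (3 * (k:ℝ) * L * (D:ℝ) + 3 * (k:ℝ) * L))) := step1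
    _ = (2:ℝ) ^ (-((m:ℝ) * H)) * (2:ℝ) ^ (-(2 * (m:ℝ))) * (2:ℝ) ^ (-(3 * (k:ℝ) * L * (D:ℝ)))
        * (2:ℝ) ^ (-(3 * (k:ℝ) * L)) := hsplit
    _ = (∏ i ∈ Finset.range m, empDistF k n y (blockOf k n i y)) * (1/4:ℝ)^m * (rr X k)^(D:ℕ)
        * rr X k := by rw [h2m, hDterm, hHdef, hent, hm]; rfl
    _ = rr (Fintype.card 𝕏) k *
      ((∏ i ∈ Finset.range (n / k), empDistF k n y (blockOf k n i y)) *
        ∏ w, phi (Fintype.card 𝕏) k (cnt k n y w)) := by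
        rw [← hX, hprod, ← hm]; ring


lemma fiber_card_le (k n : ℕ) (hk : 0 < k) (β : Fin (n / k) → (Fin k → 𝕏)) :
    (Finset.univ.filter
        (fun y : Fin n → 𝕏 => (fun i : Fin (n / k) => blockOf k n (i : ℕ) y) = β)).card
      ≤ Fintype.card 𝕏 ^ (n - (n / k) * k) := by
  classical
  have hq : (n / k) * k ≤ n := Nat.div_mul_le_self n k
  have hcard : Fintype.card 𝕏 ^ (n - (n / k) * k)
      = (Finset.univ : Finset (Fin (n - (n / k) * k) → 𝕏)).card := by
    rw [Finset.card_univ, Fintype.card_fun, Fintype.card_fin]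
  rw [hcard]
  apply Finset.card_le_card_of_injOn
    (fun y => fun j : Fin (n - (n / k) * k) => y ⟨(n / k) * k + (j : ℕ), by omega⟩)
    (fun y _ => Finset.mem_univ _)
  intro y₁ h₁ y₂ h₂ heq
  simp only [Finset.mem_coe, Finset.mem_filter] at h₁ h₂
  have hβ : ∀ i : Fin (n / k), blockOf k n (i : ℕ) y₁ = blockOf k n (i : ℕ) y₂ := by
    intro i
    rw [congrFun h₁.2 i, congrFun h₂.2 i]
  funext t
  rcases lt_or_ge (t : ℕ) ((n / k) * k) with hlt | hge
  · have hik : (t : ℕ) / k < n / k := (Nat.div_lt_iff_lt_mul hk).mpr hlt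
    have hjk : (t : ℕ) % k < k := Nat.mod_lt _ hk
    have hb := congrFun (hβ ⟨(t:ℕ)/k, hik⟩) ⟨(t:ℕ)%k, hjk⟩
    have hidx : ((t:ℕ)/k) * k + (t:ℕ)%k = (t : ℕ) := by
      rw [mul_comm]; exact Nat.div_add_mod _ _
    have hlt' : ((t:ℕ)/k) * k + (t:ℕ)%k < n := by omega
    simp only [blockOf, hlt', dif_pos] at hb
    have e1 : (⟨((t:ℕ)/k) * k + (t:ℕ)%k, hlt'⟩ : Fin n) = t := Fin.ext hidx
    rwa [e1] at hb
  · have hsub : (t : ℕ) - (n / k) * k < n - (n / k) * k := by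
      have := t.isLt; omega
    have hb := congrFun heq ⟨(t : ℕ) - (n / k) * k, hsub⟩
    simp only at hb
    have e1 : (⟨(n / k) * k + ((t:ℕ) - (n / k) * k), by omega⟩ : Fin n) = t := by
      apply Fin.ext; simp; omega
    rwa [e1] at hb

lemma sum_prod_blockWeight_le (k n : ℕ) (hk : 0 < k) (f : (Fin k → 𝕏) → ℝ)
    (hf0 : ∀ w, 0 ≤ f w) (hf1 : ∑ w, f w = 1) :
    ∑ y : Fin n → 𝕏, ∏ i ∈ Finset.range (n / k), f (blockOf k n i y)
      ≤ (Fintype.card 𝕏 : ℝ) ^ (n - (n / k) * k) := by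
  classical
  set m := n / k with hm
  have hrange : ∀ y : Fin n → 𝕏, ∏ i ∈ Finset.range m, f (blockOf k n i y)
      = ∏ i : Fin m, f (blockOf k n (i : ℕ) y) := fun y =>
    (Fin.prod_univ_eq_prod_range (fun i => f (blockOf k n i y)) m).symm
  simp only [hrange]
  rw [Finset.sum_comp (fun β : Fin m → (Fin k → 𝕏) => ∏ i : Fin m, f (β i))
    (fun y => fun i : Fin m => blockOf k n (i : ℕ) y)]
  have hgnn : ∀ β : Fin m → (Fin k → 𝕏), 0 ≤ ∏ i : Fin m, f (β i) := fun β =>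
    Finset.prod_nonneg fun i _ => hf0 _
  calc ∑ β ∈ Finset.univ.image (fun y : Fin n → 𝕏 => fun i : Fin m => blockOf k n (i : ℕ) y),
        (Finset.univ.filter
          (fun y : Fin n → 𝕏 => (fun i : Fin m => blockOf k n (i : ℕ) y) = β)).card
          • ∏ i : Fin m, f (β i)
      ≤ ∑ β ∈ Finset.univ.image (fun y : Fin n → 𝕏 => fun i : Fin m => blockOf k n (i : ℕ) y),
        (Fintype.card 𝕏 : ℝ) ^ (n - m * k) * ∏ i : Fin m, f (β i) := by
        refine Finset.sum_le_sum fun β _ => ?_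
        rw [nsmul_eq_mul]
        refine mul_le_mul_of_nonneg_right ?_ (hgnn β)
        exact_mod_cast fiber_card_le k n hk β
    _ ≤ ∑ β : Fin m → (Fin k → 𝕏), (Fintype.card 𝕏 : ℝ) ^ (n - m * k) * ∏ i : Fin m, f (β i) := by
        refine Finset.sum_le_sum_of_subset_of_nonneg (Finset.subset_univ _) fun β _ _ => ?_
        have : (0:ℝ) ≤ (Fintype.card 𝕏 : ℝ) ^ (n - m * k) := by positivity
        exact mul_nonneg this (hgnn β)
    _ = (Fintype.card 𝕏 : ℝ) ^ (n - m * k) := by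
        rw [← Finset.mul_sum]
        rw [← Fintype.piFinset_univ, Finset.sum_prod_piFinset]
        simp [hf1]


lemma sum_phi_le (X k m : ℕ) :
    ∑ j ∈ Finset.range (m + 1), phi X k j ≤ 1 + rr X k / 3 := by
  rw [Finset.sum_range_succ']
  have h0 : phi X k 0 = 1 := by simp [phi]
  have hgeom : ∑ j ∈ Finset.range m, (1/4 : ℝ) ^ j ≤ 4/3 := by
    rw [geom_sum_eq (by norm_num : (1/4 : ℝ) ≠ 1)]
    have h1 : (0:ℝ) ≤ (1/4 : ℝ) ^ m := by positivity
    have h2 : ((1/4 : ℝ) ^ m - 1) / (1/4 - 1) = (1 - (1/4:ℝ)^m) * (4/3) := by ring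
    rw [h2]; nlinarith
  have hsum : ∑ j ∈ Finset.range m, phi X k (j + 1)
      = rr X k * (1/4) * ∑ j ∈ Finset.range m, (1/4 : ℝ) ^ j := by
    rw [Finset.mul_sum]
    refine Finset.sum_congr rfl fun j _ => ?_
    simp only [phi, Nat.succ_ne_zero, if_false]
    rw [pow_succ]
    ring
  rw [h0, hsum]
  have hr := (rr_pos X k).le
  nlinarith

lemma sum_prod_phi_le (k n : ℕ) :
    ∑ c ∈ Finset.image (fun y : Fin n → 𝕏 => cnt k n y) Finset.univ,
        ∏ w, phi (Fintype.card 𝕏) k (c w)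
      ≤ (1 + rr (Fintype.card 𝕏) k / 3) ^ (Fintype.card 𝕏 ^ k) := by
  classical
  set X := Fintype.card 𝕏
  calc ∑ c ∈ Finset.image (fun y : Fin n → 𝕏 => cnt k n y) Finset.univ, ∏ w, phi X k (c w)
      ≤ ∑ c ∈ Fintype.piFinset (fun _ : Fin k → 𝕏 => Finset.range (n / k + 1)),
          ∏ w, phi X k (c w) := by
        refine Finset.sum_le_sum_of_subset_of_nonneg ?_ fun c _ _ =>
          Finset.prod_nonneg fun w _ => phi_nonneg X k _
        intro c hc
        rw [Finset.mem_image] at hc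
        obtain ⟨y, _, rfl⟩ := hc
        rw [Fintype.mem_piFinset]
        intro w
        rw [Finset.mem_range]
        exact Nat.lt_succ_of_le (cnt_le k n y w)
    _ = ∏ w : Fin k → 𝕏, ∑ j ∈ Finset.range (n / k + 1), phi X k j := by
        rw [Finset.prod_univ_sum]
    _ ≤ ∏ w : Fin k → 𝕏, (1 + rr X k / 3) := by
        refine Finset.prod_le_prod (fun w _ => ?_) (fun w _ => sum_phi_le X k (n / k))
        exact Finset.sum_nonneg fun j _ => phi_nonneg X k j
    _ = (1 + rr X k / 3) ^ (X ^ k) := by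
        rw [Finset.prod_const, Finset.card_univ, Fintype.card_fun, Fintype.card_fin]

lemma final_numeric (k n : ℕ) (hk : 0 < k) (hX2 : 2 ≤ Fintype.card 𝕏) :
    rr (Fintype.card 𝕏) k * (Fintype.card 𝕏 : ℝ) ^ (n - (n / k) * k)
      * (1 + rr (Fintype.card 𝕏) k / 3) ^ (Fintype.card 𝕏 ^ k) ≤ 1 := by
  set X := Fintype.card 𝕏 with hXdef
  set L := Real.logb 2 X with hL
  have hX1 : (1:ℝ) ≤ (X:ℝ) := by exact_mod_cast le_trans one_le_two hX2
  have hL1 : 1 ≤ L := by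
    rw [hL, show (1:ℝ) = Real.logb 2 2 from (Real.logb_self_eq_one one_lt_two).symm]
    exact Real.logb_le_logb_of_le one_lt_two (by norm_num) (by exact_mod_cast hX2)
  have hkL : 1 ≤ (k : ℝ) * L := by
    have hk1 : (1:ℝ) ≤ (k:ℝ) := by exact_mod_cast hk
    nlinarith
  have hXpow : ∀ j : ℕ, (X:ℝ) ^ j = (2:ℝ) ^ ((j:ℝ) * L) := by
    intro j
    have hXL : (X:ℝ) = (2:ℝ) ^ L := by
      rw [hL, Real.rpow_logb (by norm_num) (by norm_num) (by positivity)]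
    rw [hXL, ← Real.rpow_natCast ((2:ℝ) ^ L) j, ← Real.rpow_mul (by norm_num), mul_comm]
  -- bound the trailing-symbols factor
  have hmod : n - (n / k) * k ≤ k := by
    have h := Nat.div_add_mod' n k
    have h2 : n % k < k := Nat.mod_lt n hk
    omega
  have htrail : (X:ℝ) ^ (n - (n / k) * k) ≤ (2:ℝ) ^ ((k:ℝ) * L) := by
    rw [← hXpow k]
    exact pow_le_pow_right₀ hX1 hmod
  -- bound the phi-product factor
  have hcard : ((X ^ k : ℕ) : ℝ) = (2:ℝ) ^ ((k:ℝ) * L) := by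
    push_cast
    exact hXpow k
  have hrr : rr X k = (2:ℝ) ^ (-(3 * (k:ℝ) * L)) := rfl
  have h2kL : (2:ℝ) ^ (-(2 * ((k:ℝ) * L))) ≤ 1/4 := by
    have : (2:ℝ) ^ (-(2 * ((k:ℝ) * L))) ≤ (2:ℝ) ^ (-2 : ℝ) :=
      Real.rpow_le_rpow_of_exponent_le one_le_two (by nlinarith)
    have h24 : (2:ℝ) ^ (-2 : ℝ) = 1/4 := by
      rw [show (-2:ℝ) = -((2:ℕ):ℝ) by norm_num, Real.rpow_neg (by norm_num), Real.rpow_natCast]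
      norm_num
    rwa [h24] at this
  have hphi : (1 + rr X k / 3) ^ (X ^ k) ≤ Real.exp ((1:ℝ)/12) := by
    have hrrle := (rr_pos X k).le
    have step1 : (1 + rr X k / 3) ^ (X ^ k) ≤ Real.exp (rr X k / 3) ^ (X ^ k) := by
      apply pow_le_pow_left₀ (by positivity)
      linarith [Real.add_one_le_exp (rr X k / 3)]
    have step2 : Real.exp (rr X k / 3) ^ (X ^ k) = Real.exp (((X ^ k : ℕ):ℝ) * (rr X k / 3)) :=
      (Real.exp_nat_mul _ _).symm
    have step3 : ((X ^ k : ℕ):ℝ) * (rr X k / 3) ≤ 1/12 := by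
      calc ((X ^ k : ℕ):ℝ) * (rr X k / 3)
          = ((2:ℝ) ^ ((k:ℝ) * L) * (2:ℝ) ^ (-(3 * (k:ℝ) * L))) / 3 := by
            rw [hcard, hrr]; ring
        _ = (2:ℝ) ^ (-(2 * ((k:ℝ) * L))) / 3 := by
            rw [← Real.rpow_add (by norm_num : (0:ℝ) < 2)]
            congr 1
            ring
        _ ≤ (1/4) / 3 := by linarith
        _ ≤ 1/12 := by norm_num
    calc (1 + rr X k / 3) ^ (X ^ k) ≤ Real.exp (rr X k / 3) ^ (X ^ k) := step1
      _ = Real.exp (((X ^ k : ℕ):ℝ) * (rr X k / 3)) := step2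
      _ ≤ Real.exp ((1:ℝ)/12) := Real.exp_le_exp.mpr step3
  have hfirst : rr X k * (X:ℝ) ^ (n - (n / k) * k) ≤ 1/4 := by
    calc rr X k * (X:ℝ) ^ (n - (n / k) * k)
        ≤ rr X k * (2:ℝ) ^ ((k:ℝ) * L) :=
          mul_le_mul_of_nonneg_left htrail (rr_pos X k).le
      _ = (2:ℝ) ^ (-(2 * ((k:ℝ) * L))) := by
          rw [hrr, ← Real.rpow_add (by norm_num : (0:ℝ) < 2)]
          congr 1
          ring
      _ ≤ 1/4 := h2kL
  have hexp : Real.exp ((1:ℝ)/12) ≤ 3 := by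
    calc Real.exp ((1:ℝ)/12) ≤ Real.exp 1 := Real.exp_le_exp.mpr (by norm_num)
      _ ≤ 2.7182818286 := Real.exp_one_lt_d9.le
      _ ≤ 3 := by norm_num
  have hphipos : 0 ≤ (1 + rr X k / 3) ^ (X ^ k) := by
    have := (rr_pos X k).le; positivity
  calc rr X k * (X:ℝ) ^ (n - (n / k) * k) * (1 + rr X k / 3) ^ (X ^ k)
      ≤ (1/4) * Real.exp ((1:ℝ)/12) := by
        apply mul_le_mul hfirst hphi hphipos (by norm_num)
    _ ≤ (1/4) * 3 := by linarith
    _ ≤ 1 := by norm_num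


lemma kraft_KF (k n : ℕ) (hk : 0 < k) (hkn : k ≤ n) :
    ∑ y : Fin n → 𝕏, (2:ℝ) ^ (-(KF k n y)) ≤ 1 := by
  classical
  have h24 : (2:ℝ) ^ (-2 : ℝ) = 1/4 := by
    rw [show (-2:ℝ) = -((2:ℕ):ℝ) by norm_num, Real.rpow_neg (by norm_num), Real.rpow_natCast]
    norm_num
  rcases lt_or_ge (Fintype.card 𝕏) 2 with hX1 | hX2
  · -- trivial alphabet: only one word of length n
    have hc : Fintype.card 𝕏 = 1 := le_antisymm (by omega) Fintype.card_pos
    have hcY : Fintype.card (Fin n → 𝕏) = 1 := by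
      rw [Fintype.card_fun, Fintype.card_fin, hc, one_pow]
    have hKF : ∀ y : Fin n → 𝕏, (2:ℝ) ^ (-(KF k n y)) ≤ 1/4 := by
      intro y
      have hlogk : (0:ℝ) ≤ Real.logb 2 k :=
        Real.logb_nonneg (by norm_num) (by exact_mod_cast hk)
      have hH : 0 ≤ Hent (empDistF k n y) :=
        Hent_nonneg (empDistF_nonneg k n y) (empDistF_le_one k n y)
      have hL0 : (0:ℝ) ≤ Real.logb 2 (Fintype.card 𝕏) :=
        Real.logb_nonneg (by norm_num) (by exact_mod_cast Fintype.card_pos (α := 𝕏))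
      have hnk : (1:ℝ) ≤ (n:ℝ)/(k:ℝ) := by
        rw [le_div_iff₀ (by exact_mod_cast hk)]
        simpa using (by exact_mod_cast hkn : (k:ℝ) ≤ (n:ℝ))
      have hD : (0:ℝ) ≤ (DF k n y : ℝ) := by positivity
      have hkf : (2:ℝ) ≤ KF k n y := by
        unfold KF
        have hmul : (1:ℝ) * (Hent (empDistF k n y) + 2) ≤
            ((n:ℝ)/k) * (Hent (empDistF k n y) + 2) :=
          mul_le_mul_of_nonneg_right hnk (by linarith)
        have hk3 : (0:ℝ) ≤ 3 * (k:ℝ) * Real.logb 2 (Fintype.card 𝕏) * ((DF k n y : ℝ) + 1) := by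
          have : (0:ℝ) ≤ (k:ℝ) := by positivity
          have h1 : (0:ℝ) ≤ (DF k n y : ℝ) + 1 := by linarith
          positivity
        nlinarith
      calc (2:ℝ) ^ (-(KF k n y)) ≤ (2:ℝ) ^ (-2 : ℝ) :=
            Real.rpow_le_rpow_of_exponent_le one_le_two (by linarith)
        _ = 1/4 := h24
    calc ∑ y : Fin n → 𝕏, (2:ℝ) ^ (-(KF k n y))
        ≤ ∑ _y : Fin n → 𝕏, (1/4 : ℝ) := Finset.sum_le_sum fun y _ => hKF y
      _ = (Fintype.card (Fin n → 𝕏) : ℝ) * (1/4) := by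
          rw [Finset.sum_const, Finset.card_univ, nsmul_eq_mul]
      _ ≤ 1 := by rw [hcY]; norm_num
  · -- main case: at least two symbols
    set X := Fintype.card 𝕏 with hXdef
    set m := n / k with hm
    have hm1 : 0 < m := (Nat.one_le_div_iff hk).mpr hkn
    have hrpos := rr_pos X k
    have key : ∑ y : Fin n → 𝕏,
        ((∏ i ∈ Finset.range m, empDistF k n y (blockOf k n i y)) *
          ∏ w, phi X k (cnt k n y w))
        ≤ (X:ℝ) ^ (n - m * k) * (1 + rr X k / 3) ^ (X ^ k) := by
      rw [← Finset.sum_fiberwise_of_maps_to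
        (g := fun y : Fin n → 𝕏 => cnt k n y)
        (t := Finset.image (fun y : Fin n → 𝕏 => cnt k n y) Finset.univ)
        (fun y _ => Finset.mem_image_of_mem _ (Finset.mem_univ y))]
      have hXpownn : (0:ℝ) ≤ (X:ℝ) ^ (n - m * k) := by positivity
      calc ∑ c ∈ Finset.image (fun y : Fin n → 𝕏 => cnt k n y) Finset.univ,
            ∑ y ∈ Finset.univ.filter (fun y : Fin n → 𝕏 => cnt k n y = c),
              ((∏ i ∈ Finset.range m, empDistF k n y (blockOf k n i y)) *
                ∏ w, phi X k (cnt k n y w))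
          ≤ ∑ c ∈ Finset.image (fun y : Fin n → 𝕏 => cnt k n y) Finset.univ,
              (∏ w, phi X k (c w)) * (X:ℝ) ^ (n - m * k) := by
            refine Finset.sum_le_sum fun c hc => ?_
            obtain ⟨y₀, -, rfl⟩ := Finset.mem_image.mp hc
            have hphic : (0:ℝ) ≤ ∏ w, phi X k (cnt k n y₀ w) :=
              Finset.prod_nonneg fun w _ => phi_nonneg X k _
            have hstep : ∀ y ∈ Finset.univ.filter
                (fun y : Fin n → 𝕏 => cnt k n y = cnt k n y₀),
                ((∏ i ∈ Finset.range m, empDistF k n y (blockOf k n i y)) *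
                  ∏ w, phi X k (cnt k n y w))
                = (∏ i ∈ Finset.range m, ((cnt k n y₀ (blockOf k n i y) : ℝ) / (m:ℕ))) *
                  ∏ w, phi X k (cnt k n y₀ w) := by
              intro y hy
              have hcy : cnt k n y = cnt k n y₀ := (Finset.mem_filter.mp hy).2
              rw [← hcy]
              congr 1
              exact Finset.prod_congr rfl fun i _ => empDistF_eq_cnt k n y _
            rw [Finset.sum_congr rfl hstep, ← Finset.sum_mul, mul_comm]
            refine mul_le_mul_of_nonneg_left ?_ hphic
            -- bound the fiber sum by the full sum and evaluate
            have hf0 : ∀ w : Fin k → 𝕏, (0:ℝ) ≤ (cnt k n y₀ w : ℝ) / (m:ℕ) := by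
              intro w; positivity
            have hf1 : ∑ w, ((cnt k n y₀ w : ℝ) / (m:ℕ)) = 1 := by
              rw [← Finset.sum_div]
              rw [show ∑ w, ((cnt k n y₀ w : ℝ)) = ((∑ w, cnt k n y₀ w : ℕ) : ℝ) by push_cast; rfl]
              rw [sum_cnt]
              have : ((m:ℕ):ℝ) ≠ 0 := by exact_mod_cast hm1.ne'
              rw [← hm]
              exact div_self this
            calc ∑ y ∈ Finset.univ.filter (fun y : Fin n → 𝕏 => cnt k n y = cnt k n y₀),
                  ∏ i ∈ Finset.range m, ((cnt k n y₀ (blockOf k n i y) : ℝ) / (m:ℕ))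
                ≤ ∑ y : Fin n → 𝕏,
                  ∏ i ∈ Finset.range m, ((cnt k n y₀ (blockOf k n i y) : ℝ) / (m:ℕ)) := by
                  refine Finset.sum_le_sum_of_subset_of_nonneg (Finset.subset_univ _)
                    fun y _ _ => Finset.prod_nonneg fun i _ => hf0 _
              _ ≤ (X:ℝ) ^ (n - m * k) :=
                  sum_prod_blockWeight_le k n hk _ hf0 hf1
        _ = (X:ℝ) ^ (n - m * k) * ∑ c ∈ Finset.image (fun y : Fin n → 𝕏 => cnt k n y)
              Finset.univ, ∏ w, phi X k (c w) := by
            rw [← Finset.sum_mul, mul_comm]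
        _ ≤ (X:ℝ) ^ (n - m * k) * (1 + rr X k / 3) ^ (X ^ k) :=
            mul_le_mul_of_nonneg_left (sum_prod_phi_le k n) hXpownn
    calc ∑ y : Fin n → 𝕏, (2:ℝ) ^ (-(KF k n y))
        ≤ ∑ y : Fin n → 𝕏, rr X k *
            ((∏ i ∈ Finset.range m, empDistF k n y (blockOf k n i y)) *
              ∏ w, phi X k (cnt k n y w)) :=
          Finset.sum_le_sum fun y _ => rpow_neg_KF_le k n hk y
      _ = rr X k * ∑ y : Fin n → 𝕏,
            ((∏ i ∈ Finset.range m, empDistF k n y (blockOf k n i y)) *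
              ∏ w, phi X k (cnt k n y w)) := by rw [← Finset.mul_sum]
      _ ≤ rr X k * ((X:ℝ) ^ (n - m * k) * (1 + rr X k / 3) ^ (X ^ k)) :=
          mul_le_mul_of_nonneg_left key hrpos.le
      _ = rr X k * (X:ℝ) ^ (n - m * k) * (1 + rr X k / 3) ^ (X ^ k) := by ring
      _ ≤ 1 := final_numeric k n hk hX2

end SourceCoding

open SourceCoding

/-- Source coding inequality for the modified `k`-block code: for a stationary
process over a finite alphabet and positive integers `k ≤ n`,
`E[K(k, X_1^n)] ≥ H(X_1^n)`. -/
theorem expected_Kcode_ge_blockEntropy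
    {μ : Measure (ℤ → 𝕏)} [IsProbabilityMeasure μ]
    (hstat : MeasurePreserving shift μ μ)
    (k n : ℕ) (hk : 0 < k) (hkn : k ≤ n) :
    Hblock μ n ≤ ∫ ω, Kcode k n ω ∂μ := by
  classical
  have hmeas : Measurable (blk 0 n : (ℤ → 𝕏) → (Fin n → 𝕏)) :=
    measurable_pi_lambda _ fun i => measurable_pi_apply _
  set ν : Measure (Fin n → 𝕏) := Measure.map (blk 0 n) μ with hν
  have hprob : IsProbabilityMeasure ν := Measure.isProbabilityMeasure_map hmeas.aemeasurable
  have hpb : ∀ w, pblock μ n w = (ν {w}).toReal := by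
    intro w
    rw [hν, Measure.map_apply hmeas (measurableSet_singleton w)]
    rfl
  have hsum1 : ∑ w, pblock μ n w = 1 := by
    simp_rw [hpb]
    rw [← ENNReal.toReal_sum (fun w _ => measure_ne_top ν _)]
    have : ∑ w : Fin n → 𝕏, ν {w} = ν (Set.univ) := by
      have h := MeasureTheory.sum_measure_preimage_singleton (μ := ν)
        (Finset.univ : Finset (Fin n → 𝕏)) (f := id)
        (fun w _ => measurableSet_singleton w)
      simpa using h
    rw [this, measure_univ, ENNReal.toReal_one]
  have hKmeas : Measurable (KF k n : (Fin n → 𝕏) → ℝ) := measurable_of_countable _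
  have hKint : ∫ ω, Kcode k n ω ∂μ = ∑ w, pblock μ n w * KF k n w := by
    calc ∫ ω, Kcode k n ω ∂μ = ∫ ω, KF k n (blk 0 n ω) ∂μ := by
          simp_rw [Kcode_eq]
      _ = ∫ y, KF k n y ∂ν :=
          (integral_map hmeas.aemeasurable hKmeas.aestronglyMeasurable).symm
      _ = ∑ w, (ν {w}).toReal • KF k n w := by rw [integral_fintype]; rfl; exact .of_finite
      _ = ∑ w, pblock μ n w * KF k n w := by
          refine Finset.sum_congr rfl fun w _ => ?_
          rw [hpb, smul_eq_mul]
  rw [hKint]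
  exact Hent_le_of_kraft (pblock μ n) (KF k n)
    (fun w => ENNReal.toReal_nonneg) hsum1 (kraft_KF k n hk hkn)
end

section
/- For every stationary process (X_i)_{i∈ℤ} over a finite alphabet 𝕏, all positive integers p and k with n = pk, the expected number of distinct nonoverlapping k-blocks satisfies (k/n) E[D(k, X_1^n)] ≤ E[σ(−log₂ P(X_1^k = w | ℐ)|_{w = X_1^k} − log₂(n/k))], where σ(y) = min(2^y, 1). -/
open MeasureTheory Filter Real

variable {𝕏 : Type*} [Fintype 𝕏] [Nonempty 𝕏] [DecidableEq 𝕏]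
  [MeasurableSpace 𝕏] [MeasurableSingletonClass 𝕏]

section Helpers

set_option linter.unusedSectionVars false

/-- Conditional expectation w.r.t. the invariant σ-algebra is invariant under
composition with the map. -/
lemma condexp_comp_self {α : Type*} [MeasurableSpace α] {μ : Measure α} [IsProbabilityMeasure μ]
    {T : α → α} (hT : MeasurePreserving T μ μ) {f : α → ℝ} (hf : Integrable f μ) :
    μ[f ∘ T | MeasurableSpace.invariants T] =ᵐ[μ] μ[f | MeasurableSpace.invariants T] := by
  have hm := MeasurableSpace.invariants_le T
  have hfT : Integrable (f ∘ T) μ := (hT.integrable_comp hf.aestronglyMeasurable).2 hf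
  refine (ae_eq_condExp_of_forall_setIntegral_eq hm hfT
    (fun s _ _ => integrable_condExp.integrableOn) (fun s hs hμs => ?_)
    (StronglyMeasurable.aestronglyMeasurable stronglyMeasurable_condExp)).symm
  rw [setIntegral_condExp hm hf hs]
  have hsm : MeasurableSet s := hm _ hs
  have hinv : T ⁻¹' s = s := hs.2
  have hf' : AEStronglyMeasurable f (Measure.map T μ) := by
    rw [hT.map_eq]; exact hf.aestronglyMeasurable
  have h := setIntegral_map hsm hf' hT.measurable.aemeasurable
  rw [hT.map_eq, hinv] at h
  exact h

lemma condexp_comp_iterate {α : Type*} [MeasurableSpace α] {μ : Measure α} [IsProbabilityMeasure μ]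
    {T : α → α} (hT : MeasurePreserving T μ μ) {f : α → ℝ} (hf : Integrable f μ) (s : ℕ) :
    μ[f ∘ T^[s] | MeasurableSpace.invariants T] =ᵐ[μ] μ[f | MeasurableSpace.invariants T] := by
  induction s with
  | zero => simp
  | succ s ih =>
    have h1 : f ∘ T^[s + 1] = (f ∘ T^[s]) ∘ T := by
      funext x; simp [Function.iterate_succ_apply]
    have hint : Integrable (f ∘ T^[s]) μ :=
      ((hT.iterate s).integrable_comp hf.aestronglyMeasurable).2 hf
    rw [h1]
    exact (condexp_comp_self hT hint).trans ih

lemma measurable_sigmaFn : Measurable sigmaFn := by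
  have h : Continuous fun y : ℝ => (2 : ℝ) ^ y :=
    continuous_iff_continuousAt.2 fun y => Real.continuousAt_const_rpow (by norm_num)
  exact (h.min continuous_const).measurable

lemma measurable_logb2 : Measurable fun x : ℝ => Real.logb 2 x :=
  Real.measurable_log.div_const _

lemma sigmaFn_nonneg (y : ℝ) : 0 ≤ sigmaFn y :=
  le_min (Real.rpow_nonneg (by norm_num) _) zero_le_one

lemma sigmaFn_le_one (y : ℝ) : sigmaFn y ≤ 1 := min_le_right _ _

lemma sigma_mul {P q : ℝ} (hP : 0 < P) (hq : 0 ≤ q) :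
    q * sigmaFn (-Real.logb 2 q - Real.logb 2 P) = min P⁻¹ q := by
  rcases hq.eq_or_lt with h | h
  · simp [← h, min_eq_right (inv_nonneg.2 hP.le)]
  · have h2 : (2 : ℝ) ^ (-Real.logb 2 q - Real.logb 2 P) = (q * P)⁻¹ := by
      rw [sub_eq_add_neg, Real.rpow_add (by norm_num), Real.rpow_neg (by norm_num),
        Real.rpow_neg (by norm_num), Real.rpow_logb (by norm_num) (by norm_num) h,
        Real.rpow_logb (by norm_num) (by norm_num) hP, mul_inv]
    rw [sigmaFn, h2, mul_min_of_nonneg _ _ hq]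
    congr 1
    · field_simp
    · exact mul_one q

/-- The invariant σ-algebra of the shift, as a plain definition (not an
instance), to avoid polluting instance resolution. -/
def invAlg (𝕏 : Type*) [MeasurableSpace 𝕏] : MeasurableSpace (ℤ → 𝕏) :=
  MeasurableSpace.invariants shift

lemma invAlg_le : invAlg 𝕏 ≤ MeasurableSpace.pi := MeasurableSpace.invariants_le _

lemma measurable_blk (s l : ℕ) : Measurable (blk (𝕏 := 𝕏) s l) :=
  measurable_pi_lambda _ fun _ => measurable_pi_apply _

lemma measurableSet_blk (s l : ℕ) (w : Fin l → 𝕏) :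
    MeasurableSet {ω : ℤ → 𝕏 | blk s l ω = w} :=
  measurable_blk s l (measurableSet_singleton w)

lemma shift_iterate_apply (s : ℕ) (ω : ℤ → 𝕏) (j : ℤ) : (shift^[s]) ω j = ω (j + s) := by
  induction s generalizing ω j with
  | zero => simp
  | succ s ih =>
    rw [Function.iterate_succ_apply, ih]
    simp only [shift]
    congr 1
    push_cast
    ring

lemma blk_shift_iterate (i k : ℕ) (ω : ℤ → 𝕏) :
    blk 0 k (shift^[i * k] ω) = blk (i * k) k ω := by
  funext j
  simp only [blk, shift_iterate_apply]
  congr 1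
  push_cast
  ring

end Helpers

/-- For a stationary process over a finite alphabet, positive integers `p`, `k`
and `n = pk`, the expected number of distinct nonoverlapping `k`-blocks
satisfies `(k/n) E[D(k,X_1^n)] ≤ E[σ(−log₂ P(X_1^k = w | ℐ)|_{w=X_1^k} − log₂(n/k))]`
where `σ(y) = min(2^y, 1)`. -/
theorem expected_Dcount_le_sigma
    {μ : Measure (ℤ → 𝕏)} [IsProbabilityMeasure μ]
    (hstat : MeasurePreserving shift μ μ)
    (p k n : ℕ) (hp : 0 < p) (hk : 0 < k) (hn : n = p * k) :
    ((k : ℝ) / n) * ∫ ω, (Dcount k n ω : ℝ) ∂μ ≤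
      ∫ ω, sigmaFn (-Real.logb 2 (condP μ k (blk 0 k ω) ω)
        - Real.logb 2 ((n : ℝ) / k)) ∂μ := by
  classical
  have hm : invAlg 𝕏 ≤ MeasurableSpace.pi := invAlg_le
  set P : ℝ := (p : ℝ) with hP_def
  have hP0 : (0 : ℝ) < P := by rw [hP_def]; exact_mod_cast hp
  -- block indicator functions
  set f : (Fin k → 𝕏) → (ℤ → 𝕏) → ℝ :=
    fun w => Set.indicator {ω | blk 0 k ω = w} (fun _ => (1 : ℝ)) with hf_def
  have hq_eq : ∀ w, condP μ k w = μ[f w | invAlg 𝕏] := fun w => rfl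
  have hf_meas : ∀ w, Measurable (f w) := by
    intro w; rw [hf_def]; exact measurable_const.indicator (measurableSet_blk 0 k w)
  have hf_nonneg : ∀ w ω, 0 ≤ f w ω := by
    intro w ω; rw [hf_def]; exact Set.indicator_nonneg (fun _ _ => zero_le_one) ω
  have hf_le_one : ∀ w ω, f w ω ≤ 1 := by
    intro w ω; rw [hf_def]; simp only [Set.indicator_apply]; split <;> norm_num
  have hfint : ∀ (s : ℕ) (w : Fin k → 𝕏),
      Integrable (Set.indicator {ω : ℤ → 𝕏 | blk s k ω = w} fun _ => (1 : ℝ)) μ :=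
    fun s w => (integrable_const 1).indicator (measurableSet_blk s k w)
  have hfint0 : ∀ w, Integrable (f w) μ := by
    intro w; rw [hf_def]; exact hfint 0 w
  -- conditional probabilities of shifted blocks
  have hcond : ∀ (i : ℕ) (w : Fin k → 𝕏),
      μ[Set.indicator {ω : ℤ → 𝕏 | blk (i * k) k ω = w} (fun _ => (1 : ℝ)) | invAlg 𝕏]
        =ᵐ[μ] condP μ k w := by
    intro i w
    have hind : Set.indicator {ω : ℤ → 𝕏 | blk (i * k) k ω = w} (fun _ => (1 : ℝ))
        = (f w) ∘ shift^[i * k] := by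
      funext ω
      simp only [hf_def, Function.comp_apply, Set.indicator_apply, Set.mem_setOf_eq,
        blk_shift_iterate]
    rw [hind, hq_eq]
    exact condexp_comp_iterate hstat (hfint0 w) (i * k)
  -- basic properties of condP μ k w
  have hq_sm : ∀ w, StronglyMeasurable[invAlg 𝕏] (condP μ k w) :=
    fun _ => stronglyMeasurable_condExp
  have hq_m0 : ∀ w, Measurable (condP μ k w) :=
    fun w => ((hq_sm w).measurable).mono hm le_rfl
  have hq0 : ∀ w, 0 ≤ᵐ[μ] condP μ k w := by
    intro w
    exact condExp_nonneg (Eventually.of_forall fun ω => hf_nonneg w ω)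
  -- the union sets
  set U : (Fin k → 𝕏) → Set (ℤ → 𝕏) :=
    fun w => {ω | ∃ i < p, blk (i * k) k ω = w} with hU_def
  have hU_meas : ∀ w, MeasurableSet (U w) := by
    intro w
    have h : U w = ⋃ i ∈ Finset.range p, {ω : ℤ → 𝕏 | blk (i * k) k ω = w} := by
      ext ω; simp [hU_def, Finset.mem_range]
    rw [h]
    exact Finset.measurableSet_biUnion _ fun i _ => measurableSet_blk _ _ _
  -- Dcount as a sum of indicators
  have hnk : n / k = p := by rw [hn, Nat.mul_div_cancel _ hk]
  have hD : ∀ ω, (Dcount k n ω : ℝ) = ∑ w : Fin k → 𝕏,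
      Set.indicator (U w) (fun _ => (1 : ℝ)) ω := by
    intro ω
    rw [Dcount, hnk, Set.ncard_eq_toFinset_card', Set.toFinset_setOf, Finset.card_filter]
    push_cast
    refine Finset.sum_congr rfl fun w _ => ?_
    simp [hU_def, Set.indicator_apply]
  have hDint : ∫ ω, (Dcount k n ω : ℝ) ∂μ = ∑ w : Fin k → 𝕏, (μ (U w)).toReal := by
    rw [show (fun ω => (Dcount k n ω : ℝ))
        = fun ω => ∑ w : Fin k → 𝕏, Set.indicator (U w) (fun _ => (1 : ℝ)) ω from funext hD]
    rw [integral_finset_sum _ fun w _ => (integrable_const (1 : ℝ)).indicator (hU_meas w)]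
    refine Finset.sum_congr rfl fun w _ => ?_
    rw [integral_indicator_const (1 : ℝ) (hU_meas w)]
    simp [measureReal_def]
  -- per-word bound
  have hmin_meas : ∀ w, Measurable fun ω => min 1 (P * condP μ k w ω) :=
    fun w => measurable_const.min (measurable_const.mul (hq_m0 w))
  have hmin_int : ∀ w, Integrable (fun ω => min 1 (P * condP μ k w ω)) μ := by
    intro w
    refine Integrable.mono' (integrable_const 1) (hmin_meas w).aestronglyMeasurable ?_
    filter_upwards [hq0 w] with ω hω
    rw [Real.norm_eq_abs, abs_le]
    constructor
    · exact le_trans (by norm_num) (le_min zero_le_one (mul_nonneg hP0.le hω))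
    · exact min_le_left _ _
  have hUbound : ∀ w, (μ (U w)).toReal ≤ ∫ ω, min 1 (P * condP μ k w ω) ∂μ := by
    intro w
    have hUint : Integrable (Set.indicator (U w) fun _ => (1 : ℝ)) μ :=
      (integrable_const 1).indicator (hU_meas w)
    have h0 : (μ (U w)).toReal
        = ∫ ω, (μ[Set.indicator (U w) (fun _ => (1 : ℝ)) | invAlg 𝕏]) ω ∂μ := by
      rw [integral_condExp hm, integral_indicator_const (1 : ℝ) (hU_meas w)]
      simp [measureReal_def]
    rw [h0]
    refine integral_mono_ae integrable_condExp (hmin_int w) ?_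
    -- a.e. bound on the conditional expectation
    have hle1 : μ[Set.indicator (U w) (fun _ => (1 : ℝ)) | invAlg 𝕏] ≤ᵐ[μ] fun _ => (1 : ℝ) := by
      have h := condExp_mono (m := invAlg 𝕏) hUint (integrable_const 1)
        (Eventually.of_forall fun ω => by
          simp only [Set.indicator_apply]; split <;> norm_num)
      rwa [condExp_const hm] at h
    have hsum_int : Integrable (∑ i ∈ Finset.range p,
        Set.indicator {ω : ℤ → 𝕏 | blk (i * k) k ω = w} fun _ => (1 : ℝ)) μ :=
      integrable_finset_sum' _ fun i _ => hfint _ w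
    have hptw : ∀ ω, Set.indicator (U w) (fun _ => (1 : ℝ)) ω
        ≤ (∑ i ∈ Finset.range p,
            Set.indicator {ω : ℤ → 𝕏 | blk (i * k) k ω = w} fun _ => (1 : ℝ)) ω := by
      intro ω
      rw [Finset.sum_apply]
      by_cases hω : ω ∈ U w
      · rw [Set.indicator_of_mem hω]
        obtain ⟨i, hi, hbw⟩ := hω
        have h1 : Set.indicator {ω' : ℤ → 𝕏 | blk (i * k) k ω' = w} (fun _ => (1 : ℝ)) ω = 1 :=
          Set.indicator_of_mem (s := {ω' : ℤ → 𝕏 | blk (i * k) k ω' = w}) hbw _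
        calc (1 : ℝ)
            = Set.indicator {ω' : ℤ → 𝕏 | blk (i * k) k ω' = w} (fun _ => (1 : ℝ)) ω := h1.symm
          _ ≤ ∑ i ∈ Finset.range p,
              Set.indicator {ω' : ℤ → 𝕏 | blk (i * k) k ω' = w} (fun _ => (1 : ℝ)) ω :=
            Finset.single_le_sum
              (f := fun j => Set.indicator {ω' : ℤ → 𝕏 | blk (j * k) k ω' = w}
                (fun _ => (1 : ℝ)) ω)
              (fun j _ => Set.indicator_nonneg (fun _ _ => zero_le_one) ω)
              (Finset.mem_range.2 hi)
      · rw [Set.indicator_of_notMem hω]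
        exact Finset.sum_nonneg fun i _ => Set.indicator_nonneg (fun _ _ => zero_le_one) ω
    have hle2 := condExp_mono (m := invAlg 𝕏) hUint hsum_int (Eventually.of_forall hptw)
    have hsum_eq := condExp_finsetSum (m := invAlg 𝕏) (μ := μ)
      (s := Finset.range p)
      (f := fun i => Set.indicator {ω : ℤ → 𝕏 | blk (i * k) k ω = w} fun _ => (1 : ℝ))
      (fun i _ => hfint _ w)
    have hall : ∀ᵐ ω ∂μ, ∀ i ∈ Finset.range p,
        (μ[Set.indicator {ω' : ℤ → 𝕏 | blk (i * k) k ω' = w} (fun _ => (1 : ℝ)) | invAlg 𝕏]) ω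
          = condP μ k w ω := (eventually_all_finset _).2 fun i _ => hcond i w
    filter_upwards [hle1, hle2, hsum_eq, hall] with ω h1 h2 h3 h4
    refine le_min h1 ?_
    calc (μ[Set.indicator (U w) (fun _ => (1 : ℝ)) | invAlg 𝕏]) ω
        ≤ (μ[∑ i ∈ Finset.range p,
            Set.indicator {ω' : ℤ → 𝕏 | blk (i * k) k ω' = w} fun _ => (1 : ℝ) | invAlg 𝕏]) ω :=
          h2
      _ = ∑ i ∈ Finset.range p,
            (μ[Set.indicator {ω' : ℤ → 𝕏 | blk (i * k) k ω' = w} fun _ => (1 : ℝ) | invAlg 𝕏]) ω := by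
          rw [h3, Finset.sum_apply]
      _ = ∑ _i ∈ Finset.range p, condP μ k w ω := Finset.sum_congr rfl h4
      _ = P * condP μ k w ω := by
          rw [Finset.sum_const, Finset.card_range, nsmul_eq_mul]
  -- rescaling of the min
  have hmin_eq : ∀ w, ∫ ω, min 1 (P * condP μ k w ω) ∂μ
      = P * ∫ ω, min P⁻¹ (condP μ k w ω) ∂μ := by
    intro w
    have hpt : ∀ x : ℝ, min 1 (P * x) = P * min P⁻¹ x := fun x => by
      rw [mul_min_of_nonneg _ _ hP0.le, mul_inv_cancel₀ hP0.ne']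
    simp_rw [hpt]
    exact integral_const_mul P _
  -- the right-hand side
  have hnkR : (n : ℝ) / k = P := by
    rw [hn, hP_def]
    push_cast
    have : (k : ℝ) ≠ 0 := Nat.cast_ne_zero.2 hk.ne'
    field_simp
  set g : (Fin k → 𝕏) → (ℤ → 𝕏) → ℝ :=
    fun w ω => sigmaFn (-Real.logb 2 (condP μ k w ω) - Real.logb 2 P) with hg_def
  have hg_meas_m : ∀ w, Measurable[invAlg 𝕏] (g w) := by
    intro w
    rw [hg_def]
    exact measurable_sigmaFn.comp
      (((measurable_logb2.comp (hq_sm w).measurable).neg).sub measurable_const)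
  have hg_meas : ∀ w, Measurable (g w) := fun w => ((hg_meas_m w).mono hm le_rfl)
  have hg_nonneg : ∀ w ω, 0 ≤ g w ω := by
    intro w ω; rw [hg_def]; exact sigmaFn_nonneg _
  have hg_le_one : ∀ w ω, g w ω ≤ 1 := by
    intro w ω; rw [hg_def]; exact sigmaFn_le_one _
  have hfg_int : ∀ w, Integrable (g w * f w) μ := by
    intro w
    refine Integrable.mono' (integrable_const 1)
      ((hg_meas w).mul (hf_meas w)).aestronglyMeasurable
      (Eventually.of_forall fun ω => ?_)
    rw [Pi.mul_apply, Real.norm_eq_abs, abs_mul, abs_of_nonneg (hg_nonneg w ω),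
      abs_of_nonneg (hf_nonneg w ω)]
    calc g w ω * f w ω ≤ 1 * 1 :=
          mul_le_mul (hg_le_one w ω) (hf_le_one w ω) (hf_nonneg w ω) zero_le_one
      _ = 1 := one_mul 1
  have hRHS : ∫ ω, sigmaFn (-Real.logb 2 (condP μ k (blk 0 k ω) ω)
        - Real.logb 2 ((n : ℝ) / k)) ∂μ
      = ∑ w : Fin k → 𝕏, ∫ ω, (g w * f w) ω ∂μ := by
    have hpt : ∀ ω, sigmaFn (-Real.logb 2 (condP μ k (blk 0 k ω) ω)
        - Real.logb 2 ((n : ℝ) / k)) = ∑ w : Fin k → 𝕏, (g w * f w) ω := by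
      intro ω
      rw [hnkR]
      have h : ∀ w, (g w * f w) ω = if blk 0 k ω = w then g w ω else 0 := by
        intro w
        rw [Pi.mul_apply, hf_def]
        simp only [Set.indicator_apply, Set.mem_setOf_eq]
        split <;> simp
      simp_rw [h]
      rw [Finset.sum_ite_eq Finset.univ (blk 0 k ω) fun w => g w ω]
      simp [hg_def]
    rw [show (fun ω => sigmaFn (-Real.logb 2 (condP μ k (blk 0 k ω) ω)
        - Real.logb 2 ((n : ℝ) / k))) = fun ω => ∑ w : Fin k → 𝕏, (g w * f w) ω from funext hpt]
    exact integral_finset_sum _ fun w _ => hfg_int w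
  -- pull-out property
  have hpull : ∀ w, ∫ ω, (g w * f w) ω ∂μ = ∫ ω, min P⁻¹ (condP μ k w ω) ∂μ := by
    intro w
    have hmul := condExp_mul_of_stronglyMeasurable_left (μ := μ) (hg_meas_m w).stronglyMeasurable
      (hfg_int w) (hfint0 w)
    calc ∫ ω, (g w * f w) ω ∂μ
        = ∫ ω, (μ[g w * f w | invAlg 𝕏]) ω ∂μ := (integral_condExp hm).symm
      _ = ∫ ω, (g w * μ[f w | invAlg 𝕏]) ω ∂μ := integral_congr_ae hmul
      _ = ∫ ω, min P⁻¹ (condP μ k w ω) ∂μ := by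
          refine integral_congr_ae ?_
          filter_upwards [hq0 w] with ω hω
          rw [Pi.mul_apply, ← hq_eq, mul_comm]
          exact (sigma_mul hP0 hω)
  -- final assembly
  have hkn : (k : ℝ) / n * P = 1 := by
    rw [hn, hP_def]
    push_cast
    have hk0 : (k : ℝ) ≠ 0 := Nat.cast_ne_zero.2 hk.ne'
    have hp0 : (p : ℝ) ≠ 0 := Nat.cast_ne_zero.2 hp.ne'
    field_simp
  have hkn_nonneg : (0 : ℝ) ≤ (k : ℝ) / n := by positivity
  calc ((k : ℝ) / n) * ∫ ω, (Dcount k n ω : ℝ) ∂μ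
      = ((k : ℝ) / n) * ∑ w : Fin k → 𝕏, (μ (U w)).toReal := by rw [hDint]
    _ ≤ ((k : ℝ) / n) * ∑ w : Fin k → 𝕏, P * ∫ ω, min P⁻¹ (condP μ k w ω) ∂μ := by
        refine mul_le_mul_of_nonneg_left (Finset.sum_le_sum fun w _ => ?_) hkn_nonneg
        rw [← hmin_eq w]
        exact hUbound w
    _ = ∑ w : Fin k → 𝕏, ∫ ω, min P⁻¹ (condP μ k w ω) ∂μ := by
        rw [← Finset.mul_sum, ← mul_assoc, hkn, one_mul]
    _ = ∑ w : Fin k → 𝕏, ∫ ω, (g w * f w) ω ∂μ :=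
        Finset.sum_congr rfl fun w _ => (hpull w).symm
    _ = ∫ ω, sigmaFn (-Real.logb 2 (condP μ k (blk 0 k ω) ω)
          - Real.logb 2 ((n : ℝ) / k)) ∂μ := hRHS.symm
end

section
/- For every stationary process (X_i)_{i∈ℤ} over a finite alphabet 𝕏, all positive integers p and k with n = pk, and every real m ≥ 1, the expected number of distinct nonoverlapping k-blocks satisfies (k/n) E[D(k, X_1^n)] ≤ 1/m + (1 − 1/m) σ(m H(X_1^k|ℐ) − log₂(n/k)), where σ(y) = min(2^y, 1). -/
set_option linter.unusedSectionVars false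
set_option linter.unusedVariables false
set_option maxHeartbeats 1000000

open MeasureTheory Filter Real

variable {𝕏 : Type*} [Fintype 𝕏] [Nonempty 𝕏] [DecidableEq 𝕏]
  [MeasurableSpace 𝕏] [MeasurableSingletonClass 𝕏]

/-! ### Auxiliary lemmas -/

lemma measurable_shift : Measurable (shift (𝕏 := 𝕏)) :=
  measurable_pi_lambda _ fun i => measurable_pi_apply (i + 1)

lemma shift_iter (j : ℕ) (ω : ℤ → 𝕏) (i : ℤ) : (shift^[j] ω) i = ω (i + j) := by
  induction j generalizing ω i with
  | zero => simp
  | succ j ih =>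
    rw [Function.iterate_succ_apply, ih]
    simp [shift]
    ring_nf

lemma blk_shift (j l : ℕ) (ω : ℤ → 𝕏) : blk 0 l (shift^[j] ω) = blk j l ω := by
  funext i
  simp only [blk, shift_iter]
  ring_nf

lemma preimage_iter_invariant {α : Type*} {f : α → α} [MeasurableSpace α] {s : Set α}
    (hs : MeasurableSet[MeasurableSpace.invariants f] s) (j : ℕ) : f^[j] ⁻¹' s = s := by
  induction j with
  | zero => simp
  | succ j ih =>
    have h1 : f ⁻¹' s = s := (MeasurableSpace.measurableSet_invariants.mp hs).2
    rw [Function.iterate_succ']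
    show (f ∘ f^[j]) ⁻¹' s = s
    rw [Set.preimage_comp, h1, ih]

lemma sum_min_le_aux {A : Type*} [Fintype A] (q : A → ℝ) (P c : ℝ)
    (hP : 0 < P) (hc : 0 < c) (hq0 : ∀ w, 0 ≤ q w) (hq1 : ∑ w, q w = 1) :
    ∑ w, min 1 (P * q w) ≤
      P * (min (1 / (P * c)) 1 +
        (∑ w ∈ Finset.univ.filter fun w => q w < c, q w) * (1 - min (1 / (P * c)) 1)) := by
  classical
  set s := min (1 / (P * c)) 1 with hs
  set B := ∑ w ∈ Finset.univ.filter fun w => q w < c, q w with hB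
  set G := ∑ w ∈ Finset.univ.filter fun w => ¬ q w < c, q w with hG
  have hBG : B + G = 1 := by
    rw [hB, hG, Finset.sum_filter_add_sum_filter_not, hq1]
  have hG0 : (0:ℝ) ≤ G := Finset.sum_nonneg fun w _ => hq0 w
  have hsplit : ∑ w, min 1 (P * q w)
      = (∑ w ∈ Finset.univ.filter fun w => q w < c, min 1 (P * q w))
        + ∑ w ∈ Finset.univ.filter fun w => ¬ q w < c, min 1 (P * q w) :=
    (Finset.sum_filter_add_sum_filter_not _ _ _).symm
  have h1 : (∑ w ∈ Finset.univ.filter fun w => q w < c, min 1 (P * q w)) ≤ P * B := by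
    rw [hB, Finset.mul_sum]
    exact Finset.sum_le_sum fun w _ => min_le_right _ _
  have hcard : ((Finset.univ.filter fun w => ¬ q w < c).card : ℝ) * c ≤ G := by
    rw [hG]
    calc ((Finset.univ.filter fun w => ¬ q w < c).card : ℝ) * c
        = ∑ _w ∈ Finset.univ.filter fun w => ¬ q w < c, c := by
          rw [Finset.sum_const, nsmul_eq_mul]
      _ ≤ _ := Finset.sum_le_sum fun w hw => le_of_not_gt (Finset.mem_filter.mp hw).2
  have h2 : (∑ w ∈ Finset.univ.filter fun w => ¬ q w < c, min 1 (P * q w)) ≤ P * G * s := by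
    rcases le_or_gt (1 / (P * c)) 1 with hcase | hcase
    · have hseq : s = 1 / (P * c) := min_eq_left hcase
      have hcardG : ((Finset.univ.filter fun w => ¬ q w < c).card : ℝ) ≤ G / c :=
        (le_div_iff₀ hc).mpr hcard
      calc (∑ w ∈ Finset.univ.filter fun w => ¬ q w < c, min 1 (P * q w))
          ≤ ∑ _w ∈ Finset.univ.filter fun w => ¬ q w < c, (1:ℝ) :=
            Finset.sum_le_sum fun w _ => min_le_left _ _
        _ = ((Finset.univ.filter fun w => ¬ q w < c).card : ℝ) := by simp
        _ ≤ G / c := hcardG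
        _ = P * G * s := by rw [hseq]; field_simp
    · have hseq : s = 1 := min_eq_right hcase.le
      rw [hseq, mul_one, Finset.mul_sum]
      exact Finset.sum_le_sum fun w _ => min_le_right _ _
  have hGB : G = 1 - B := by linarith
  calc ∑ w, min 1 (P * q w) ≤ P * B + P * G * s := by rw [hsplit]; exact add_le_add h1 h2
    _ = P * (s + B * (1 - s)) := by rw [hGB]; ring

lemma setIntegral_indicator_one {μ : Measure (ℤ → 𝕏)} {s t : Set (ℤ → 𝕏)}
    (ht : MeasurableSet t) :
    ∫ x in s, t.indicator (fun _ => (1:ℝ)) x ∂μ = (μ (t ∩ s)).toReal := by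
  rw [integral_indicator ht, setIntegral_const, measureReal_restrict_apply ht]
  simp [Measure.real]

lemma condexp_blk_shift {μ : Measure (ℤ → 𝕏)} [IsProbabilityMeasure μ]
    (hstat : MeasurePreserving shift μ μ) (k : ℕ) (w : Fin k → 𝕏) (j : ℕ) :
    μ[Set.indicator {ω | blk j k ω = w} (fun _ => (1 : ℝ)) | MeasurableSpace.invariants shift]
      =ᵐ[μ] condP μ k w := by
  have hm : MeasurableSpace.invariants (shift (𝕏 := 𝕏)) ≤ _ :=
    MeasurableSpace.invariants_le shift
  have hA : MeasurableSet {ω : ℤ → 𝕏 | blk 0 k ω = w} := measurableSet_blk 0 k w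
  have hB : MeasurableSet {ω : ℤ → 𝕏 | blk j k ω = w} := measurableSet_blk j k w
  have hBpre : {ω : ℤ → 𝕏 | blk j k ω = w} = shift^[j] ⁻¹' {ω | blk 0 k ω = w} := by
    ext ω; simp only [Set.mem_preimage, Set.mem_setOf_eq, blk_shift]
  refine (ae_eq_condExp_of_forall_setIntegral_eq hm
    ((integrable_const (1:ℝ)).indicator hB) (fun s _ _ => integrable_condExp.integrableOn)
    (fun s hs _ => ?_)
    (StronglyMeasurable.aestronglyMeasurable stronglyMeasurable_condExp)).symm
  show ∫ x in s, condP μ k w x ∂μ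
      = ∫ x in s, Set.indicator {ω | blk j k ω = w} (fun _ => (1:ℝ)) x ∂μ
  have h1 : ∫ x in s, condP μ k w x ∂μ
      = ∫ x in s, Set.indicator {ω | blk 0 k ω = w} (fun _ => (1:ℝ)) x ∂μ :=
    setIntegral_condExp hm ((integrable_const (1:ℝ)).indicator hA) hs
  rw [h1, setIntegral_indicator_one hA, setIntegral_indicator_one hB]
  congr 1
  have hs' : shift^[j] ⁻¹' s = s := preimage_iter_invariant hs j
  have hinter : {ω : ℤ → 𝕏 | blk j k ω = w} ∩ s
      = shift^[j] ⁻¹' ({ω | blk 0 k ω = w} ∩ s) := by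
    rw [Set.preimage_inter, hs', hBpre]
  rw [hinter]
  exact ((hstat.iterate j).measure_preimage
    ((hA.inter (hm s hs)).nullMeasurableSet)).symm

section CondPFacts

variable {μ : Measure (ℤ → 𝕏)} [IsProbabilityMeasure μ] {k : ℕ} {w : Fin k → 𝕏}

lemma condP_nonneg : 0 ≤ᵐ[μ] condP μ k w :=
  condExp_nonneg (ae_of_all _ fun ω => Set.indicator_nonneg (fun _ _ => zero_le_one) ω)

lemma condP_le_one : condP μ k w ≤ᵐ[μ] fun _ => (1:ℝ) := by
  have hm : MeasurableSpace.invariants (shift (𝕏 := 𝕏)) ≤ _ :=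
    MeasurableSpace.invariants_le shift
  have h := condExp_mono (m := MeasurableSpace.invariants (shift (𝕏 := 𝕏)))
    (μ := μ) ((integrable_const (1:ℝ)).indicator (measurableSet_blk 0 k w))
    (integrable_const (1:ℝ))
    (ae_of_all _ fun ω => Set.indicator_le_self' (fun _ _ => zero_le_one) ω)
  rwa [condExp_const hm] at h

/-- a.e. on the event `blk 0 k ω = w`, the conditional probability is positive. -/
lemma condP_pos_on : ∀ᵐ ω ∂μ, blk 0 k ω = w → 0 < condP μ k w ω := by
  have hm : MeasurableSpace.invariants (shift (𝕏 := 𝕏)) ≤ _ :=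
    MeasurableSpace.invariants_le shift
  have hA : MeasurableSet {ω : ℤ → 𝕏 | blk 0 k ω = w} := measurableSet_blk 0 k w
  set g := condP μ k w with hg
  have hsm : StronglyMeasurable[MeasurableSpace.invariants (shift (𝕏 := 𝕏))] g :=
    stronglyMeasurable_condExp
  have hTm : MeasurableSet[MeasurableSpace.invariants (shift (𝕏 := 𝕏))] {ω | g ω ≤ 0} := by
    show MeasurableSet[MeasurableSpace.invariants (shift (𝕏 := 𝕏))] (g ⁻¹' Set.Iic 0)
    exact hsm.measurable measurableSet_Iic
  have h1 : ∫ ω in {ω | g ω ≤ 0}, g ω ∂μ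
      = ∫ ω in {ω | g ω ≤ 0}, Set.indicator {ω | blk 0 k ω = w} (fun _ => (1:ℝ)) ω ∂μ :=
    setIntegral_condExp hm ((integrable_const (1:ℝ)).indicator hA) hTm
  have h2 : ∫ ω in {ω | g ω ≤ 0}, g ω ∂μ ≤ 0 :=
    setIntegral_nonpos (hm _ hTm) fun ω hω => hω
  have h3 : ∫ ω in {ω | g ω ≤ 0}, Set.indicator {ω | blk 0 k ω = w} (fun _ => (1:ℝ)) ω ∂μ
      = (μ ({ω | blk 0 k ω = w} ∩ {ω | g ω ≤ 0})).toReal :=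
    setIntegral_indicator_one hA
  have h4 : μ ({ω | blk 0 k ω = w} ∩ {ω | g ω ≤ 0}) = 0 := by
    have hle : (μ ({ω | blk 0 k ω = w} ∩ {ω | g ω ≤ 0})).toReal ≤ 0 := by
      rw [← h3, ← h1]; exact h2
    have hge := ENNReal.toReal_nonneg (a := μ ({ω | blk 0 k ω = w} ∩ {ω | g ω ≤ 0}))
    have htr : (μ ({ω | blk 0 k ω = w} ∩ {ω | g ω ≤ 0})).toReal = 0 := le_antisymm hle hge
    exact (ENNReal.toReal_eq_zero_iff _).mp htr |>.resolve_right (measure_ne_top μ _)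
  have h5 := measure_eq_zero_iff_ae_notMem.mp h4
  filter_upwards [h5] with ω hω hblk
  by_contra hpos
  exact hω ⟨hblk, le_of_not_gt hpos⟩

lemma log2_pos : (0:ℝ) < Real.log 2 := Real.log_pos one_lt_two

lemma min_neg_logb_mul_le {x : ℝ} (h0 : 0 ≤ x) (h1 : x ≤ 1) (N : ℝ) :
    min (-Real.logb 2 x) N * x ≤ 1 / Real.log 2 := by
  rcases eq_or_lt_of_le h0 with hx0 | hx0
  · rw [← hx0, mul_zero]
    positivity
  · have hlb : (0:ℝ) ≤ -Real.logb 2 x := by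
      rw [neg_nonneg]; exact Real.logb_nonpos one_lt_two h0 h1
    have step1 : min (-Real.logb 2 x) N * x ≤ (-Real.logb 2 x) * x :=
      mul_le_mul_of_nonneg_right (min_le_left _ _) h0
    have step2 : (-Real.log x) * x ≤ 1 := by
      have hlog := Real.log_le_sub_one_of_pos (x := x⁻¹) (by positivity)
      rw [Real.log_inv] at hlog
      have h' : (-Real.log x) * x ≤ (x⁻¹ - 1) * x := mul_le_mul_of_nonneg_right hlog h0
      have h'' : (x⁻¹ - 1) * x = 1 - x := by field_simp
      linarith
    have step3 : (-Real.logb 2 x) * x = ((-Real.log x) * x) / Real.log 2 := by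
      rw [Real.logb]; ring
    calc min (-Real.logb 2 x) N * x ≤ (-Real.logb 2 x) * x := step1
      _ = ((-Real.log x) * x) / Real.log 2 := step3
      _ ≤ 1 / Real.log 2 := (div_le_div_iff_of_pos_right log2_pos).mpr step2

lemma integrable_indicator_neg_logb (k : ℕ) (w : Fin k → 𝕏) :
    Integrable (Set.indicator {ω : ℤ → 𝕏 | blk 0 k ω = w}
      (fun ω => -Real.logb 2 (condP μ k w ω))) μ := by
  have hm : MeasurableSpace.invariants (shift (𝕏 := 𝕏)) ≤ _ :=
    MeasurableSpace.invariants_le shift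
  have hA : MeasurableSet {ω : ℤ → 𝕏 | blk 0 k ω = w} := measurableSet_blk 0 k w
  set g := condP μ k w with hgdef
  have hgsm : StronglyMeasurable[MeasurableSpace.invariants (shift (𝕏 := 𝕏))] g :=
    stronglyMeasurable_condExp
  have hgm : Measurable g := (hgsm.mono hm).measurable
  have hlogm : Measurable fun x : ℝ => -Real.logb 2 x := by
    have hre : (fun x : ℝ => -Real.logb 2 x) = fun x => -(Real.log x / Real.log 2) := by
      funext x; rw [Real.logb]
    rw [hre]; exact (Real.measurable_log.div_const _).neg
  have hh : Measurable fun ω : ℤ → 𝕏 => -Real.logb 2 (g ω) := hlogm.comp hgm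
  have h0 := condP_nonneg (μ := μ) (k := k) (w := w)
  have h1 := condP_le_one (μ := μ) (k := k) (w := w)
  set A := {ω : ℤ → 𝕏 | blk 0 k ω = w} with hAdef
  set φ := A.indicator (fun ω => -Real.logb 2 (g ω)) with hφdef
  have hφm : Measurable φ := hh.indicator hA
  have hφ0 : 0 ≤ᵐ[μ] φ := by
    filter_upwards [h0, h1] with ω h0ω h1ω
    simp only [Pi.zero_apply] at h0ω ⊢
    by_cases hω : ω ∈ A
    · rw [hφdef, Set.indicator_of_mem hω, neg_nonneg]
      exact Real.logb_nonpos one_lt_two h0ω h1ω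
    · rw [hφdef, Set.indicator_of_notMem hω]
  -- truncations
  set φN : ℕ → (ℤ → 𝕏) → ℝ :=
    fun N => A.indicator (fun ω => min (-Real.logb 2 (g ω)) (N:ℝ)) with hφNdef
  have hφNm : ∀ N, Measurable (φN N) := fun N =>
    (hh.min measurable_const).indicator hA
  have hφN0 : ∀ N, 0 ≤ᵐ[μ] φN N := by
    intro N
    filter_upwards [h0, h1] with ω h0ω h1ω
    simp only [Pi.zero_apply] at h0ω ⊢
    by_cases hω : ω ∈ A
    · rw [hφNdef]; simp only [Set.indicator_of_mem hω]
      exact le_min (by rw [neg_nonneg]; exact Real.logb_nonpos one_lt_two h0ω h1ω)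
        (Nat.cast_nonneg N)
    · rw [hφNdef]; simp only [Set.indicator_of_notMem hω]; exact le_rfl
  have hφN_int : ∀ N, Integrable (φN N) μ := by
    intro N
    refine Integrable.mono (integrable_const (N:ℝ)) (hφNm N).aestronglyMeasurable ?_
    filter_upwards [h0, h1] with ω h0ω h1ω
    simp only [Pi.zero_apply] at h0ω ⊢
    rw [Real.norm_of_nonneg (Nat.cast_nonneg N)]
    by_cases hω : ω ∈ A
    · rw [hφNdef]; simp only [Set.indicator_of_mem hω]
      rw [Real.norm_of_nonneg (le_min
        (by rw [neg_nonneg]; exact Real.logb_nonpos one_lt_two h0ω h1ω)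
        (Nat.cast_nonneg N))]
      exact min_le_right _ _
    · rw [hφNdef]; simp only [Set.indicator_of_notMem hω, norm_zero]
      exact Nat.cast_nonneg N
  -- the key uniform bound on truncated integrals
  have hbound : ∀ N : ℕ, ∫ ω, φN N ω ∂μ ≤ 1 / Real.log 2 := by
    intro N
    have hsmN : StronglyMeasurable[MeasurableSpace.invariants (shift (𝕏 := 𝕏))]
        (fun ω : ℤ → 𝕏 => min (-Real.logb 2 (g ω)) (N:ℝ)) :=
      ((hlogm.min measurable_const).comp hgsm.measurable).stronglyMeasurable
    have hprod : (fun ω : ℤ → 𝕏 => min (-Real.logb 2 (g ω)) (N:ℝ))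
        * A.indicator (fun _ => (1:ℝ)) = φN N := by
      funext ω
      by_cases hω : ω ∈ A
      · simp [hφNdef, Set.indicator_of_mem hω]
      · simp [hφNdef, Set.indicator_of_notMem hω]
    have hpull := condExp_mul_of_stronglyMeasurable_left (μ := μ) hsmN
      (by rw [hprod]; exact hφN_int N)
      ((integrable_const (1:ℝ)).indicator hA)
    have hstep : ∫ ω, φN N ω ∂μ
        = ∫ ω, min (-Real.logb 2 (g ω)) (N:ℝ) * g ω ∂μ := by
      rw [← hprod, ← integral_condExp hm, integral_congr_ae hpull]
      rfl
    rw [hstep]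
    have hconst : ∫ ω, (1 / Real.log 2 : ℝ) ∂μ = 1 / Real.log 2 := by
      simp [measure_univ]
    rw [← hconst]
    refine integral_mono_ae ?_ (integrable_const _) ?_
    · refine Integrable.mono (integrable_const (N:ℝ))
        ((hh.min measurable_const).mul hgm).aestronglyMeasurable ?_
      filter_upwards [h0, h1] with ω h0ω h1ω
      simp only [Pi.zero_apply] at h0ω ⊢
      rw [Real.norm_of_nonneg (Nat.cast_nonneg N), Real.norm_eq_abs, abs_mul]
      have hlb : (0:ℝ) ≤ -Real.logb 2 (g ω) := by
        rw [neg_nonneg]; exact Real.logb_nonpos one_lt_two h0ω h1ω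
      rw [abs_of_nonneg (le_min hlb (Nat.cast_nonneg N)), abs_of_nonneg h0ω]
      calc min (-Real.logb 2 (g ω)) (N:ℝ) * g ω ≤ (N:ℝ) * 1 :=
            mul_le_mul (min_le_right _ _) h1ω h0ω (Nat.cast_nonneg N)
        _ = (N:ℝ) := mul_one _
    · filter_upwards [h0, h1] with ω h0ω h1ω
      simp only [Pi.zero_apply] at h0ω ⊢
      exact min_neg_logb_mul_le h0ω h1ω _
  -- monotone convergence
  refine ⟨hφm.aestronglyMeasurable, ?_⟩
  rw [hasFiniteIntegral_iff_norm]
  have hcong : ∫⁻ ω, ENNReal.ofReal ‖φ ω‖ ∂μ = ∫⁻ ω, ENNReal.ofReal (φ ω) ∂μ := by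
    refine lintegral_congr_ae ?_
    filter_upwards [hφ0] with ω hω
    rw [Real.norm_of_nonneg hω]
  rw [hcong]
  have hsup : ∀ ω, (⨆ N : ℕ, ENNReal.ofReal (φN N ω)) = ENNReal.ofReal (φ ω) := by
    intro ω
    by_cases hω : ω ∈ A
    · rw [hφdef]
      simp only [hφNdef, Set.indicator_of_mem hω]
      refine le_antisymm (iSup_le fun N => ENNReal.ofReal_le_ofReal (min_le_left _ _)) ?_
      refine le_iSup_of_le ⌈-Real.logb 2 (g ω)⌉₊ ?_
      rw [min_eq_left (Nat.le_ceil _)]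
    · rw [hφdef]
      simp only [hφNdef, Set.indicator_of_notMem hω]
      simp
  have hmono : ∀ ω, Monotone fun N : ℕ => ENNReal.ofReal (φN N ω) := by
    intro ω N M hNM
    by_cases hω : ω ∈ A
    · simp only [hφNdef, Set.indicator_of_mem hω]
      exact ENNReal.ofReal_le_ofReal (min_le_min le_rfl (Nat.cast_le.mpr hNM))
    · simp only [hφNdef, Set.indicator_of_notMem hω]; exact le_rfl
  have hlim : ∫⁻ ω, ENNReal.ofReal (φ ω) ∂μ = ⨆ N : ℕ, ∫⁻ ω, ENNReal.ofReal (φN N ω) ∂μ := by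
    rw [← lintegral_iSup' (fun N => ((hφNm N).ennreal_ofReal).aemeasurable)
      (ae_of_all _ hmono)]
    exact lintegral_congr fun ω => (hsup ω).symm
  rw [hlim]
  have hfin : ∀ N : ℕ, ∫⁻ ω, ENNReal.ofReal (φN N ω) ∂μ ≤ ENNReal.ofReal (1 / Real.log 2) := by
    intro N
    rw [← ofReal_integral_eq_lintegral_ofReal (hφN_int N) (hφN0 N)]
    exact ENNReal.ofReal_le_ofReal (hbound N)
  exact lt_of_le_of_lt (iSup_le hfin) ENNReal.ofReal_lt_top

lemma sum_indicator_blk (k : ℕ) (f : (Fin k → 𝕏) → (ℤ → 𝕏) → ℝ) (ω : ℤ → 𝕏) :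
    ∑ w : Fin k → 𝕏, Set.indicator {ω' | blk 0 k ω' = w} (f w) ω = f (blk 0 k ω) ω := by
  classical
  have h : ∀ w : Fin k → 𝕏, Set.indicator {ω' | blk 0 k ω' = w} (f w) ω
      = if blk 0 k ω = w then f w ω else 0 := fun w => by
    rw [Set.indicator_apply]; rfl
  simp only [h]
  rw [Finset.sum_ite_eq]
  simp

lemma integrable_ell (k : ℕ) :
    Integrable (fun ω => -Real.logb 2 (condP μ k (blk 0 k ω) ω)) μ := by
  have h : (fun ω => -Real.logb 2 (condP μ k (blk 0 k ω) ω))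
      = fun ω => ∑ w : Fin k → 𝕏,
          Set.indicator {ω' | blk 0 k ω' = w} (fun ω' => -Real.logb 2 (condP μ k w ω')) ω := by
    funext ω
    exact (sum_indicator_blk k (fun w ω' => -Real.logb 2 (condP μ k w ω')) ω).symm
  rw [h]
  exact integrable_finset_sum _ fun w _ => integrable_indicator_neg_logb k w

end CondPFacts

/-- For a stationary process over a finite alphabet, positive integers `p`, `k`
with `n = pk`, and real `m ≥ 1`, the expected number of distinct nonoverlapping
`k`-blocks satisfies
`(k/n) E[D(k,X_1^n)] ≤ 1/m + (1 − 1/m) σ(m H(X_1^k|ℐ) − log₂(n/k))`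
where `σ(y) = min(2^y, 1)`. -/
theorem expected_Dcount_le_sigma_condH
    {μ : Measure (ℤ → 𝕏)} [IsProbabilityMeasure μ]
    (hstat : MeasurePreserving shift μ μ)
    (p k n : ℕ) (hp : 0 < p) (hk : 0 < k) (hn : n = p * k)
    (m : ℝ) (hm : 1 ≤ m) :
    ((k : ℝ) / n) * ∫ ω, (Dcount k n ω : ℝ) ∂μ ≤
      1 / m + (1 - 1 / m) * sigmaFn (m * condH μ k - Real.logb 2 ((n : ℝ) / k)) := by
  classical
  have hle : MeasurableSpace.invariants (shift (𝕏 := 𝕏)) ≤ _ :=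
    MeasurableSpace.invariants_le shift
  have hnk : n / k = p := by rw [hn, Nat.mul_div_cancel _ hk]
  have hppos : (0:ℝ) < (p:ℝ) := by exact_mod_cast hp
  have hkne : (k:ℝ) ≠ 0 := by
    have : (0:ℝ) < (k:ℝ) := by exact_mod_cast hk
    exact this.ne'
  have hnkreal : (n:ℝ) / k = (p:ℝ) := by
    rw [hn]; push_cast; rw [mul_div_assoc, div_self hkne, mul_one]
  have hkn : (k:ℝ) / (n:ℝ) = ((p:ℝ))⁻¹ := by
    rw [hn]; push_cast; rw [mul_comm, ← div_div, div_self hkne, one_div]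
  have hm0 : (0:ℝ) < m := lt_of_lt_of_le one_pos hm
  set g : (Fin k → 𝕏) → (ℤ → 𝕏) → ℝ := condP μ k with hgdef
  set A : (Fin k → 𝕏) → Set (ℤ → 𝕏) := fun w => {ω | blk 0 k ω = w} with hAdef
  have hA : ∀ w, MeasurableSet (A w) := fun w => measurableSet_blk 0 k w
  have hgsm : ∀ w, StronglyMeasurable[MeasurableSpace.invariants (shift (𝕏 := 𝕏))] (g w) :=
    fun w => stronglyMeasurable_condExp
  have hgm : ∀ w, Measurable (g w) := fun w => ((hgsm w).mono hle).measurable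
  have hg0 : ∀ᵐ ω ∂μ, ∀ w, 0 ≤ g w ω :=
    ae_all_iff.mpr fun w => condP_nonneg.mono fun ω h => by simpa using h
  have hg1 : ∀ᵐ ω ∂μ, ∀ w, g w ω ≤ 1 :=
    ae_all_iff.mpr fun w => condP_le_one.mono fun ω h => h
  have hgpos : ∀ᵐ ω ∂μ, ∀ w, blk 0 k ω = w → 0 < g w ω :=
    ae_all_iff.mpr fun w => condP_pos_on
  have hind_int : ∀ w, Integrable (Set.indicator (A w) fun _ => (1:ℝ)) μ :=
    fun w => (integrable_const 1).indicator (hA w)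
  -- the conditional probabilities sum to 1 a.e.
  have hgsum : ∀ᵐ ω ∂μ, ∑ w, g w ω = 1 := by
    have hsum := condExp_finset_sum (μ := μ)
      (m := MeasurableSpace.invariants (shift (𝕏 := 𝕏)))
      (s := (Finset.univ : Finset (Fin k → 𝕏)))
      (f := fun w : Fin k → 𝕏 => Set.indicator (A w) fun _ => (1:ℝ))
      (fun w _ => hind_int w)
    have hone : (∑ w : Fin k → 𝕏, Set.indicator (A w) fun _ => (1:ℝ)) = fun _ => (1:ℝ) := by
      funext ω
      rw [Finset.sum_apply]
      exact sum_indicator_blk k (fun _ _ => (1:ℝ)) ω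
    rw [hone, condExp_const hle] at hsum
    filter_upwards [hsum] with ω hω
    have h2 : (1:ℝ) = ∑ w : Fin k → 𝕏,
        (μ[Set.indicator (A w) fun _ => (1:ℝ)|MeasurableSpace.invariants shift]) ω := by
      simpa [Finset.sum_apply] using hω
    calc ∑ w, g w ω
        = ∑ w : Fin k → 𝕏,
          (μ[Set.indicator (A w) fun _ => (1:ℝ)|MeasurableSpace.invariants shift]) ω := rfl
      _ = 1 := h2.symm
  -- sets of sequences in which the word w occurs as one of the p blocks
  set E : (Fin k → 𝕏) → Set (ℤ → 𝕏) := fun w => {ω | ∃ i < p, blk (i*k) k ω = w} with hEdef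
  have hE : ∀ w, MeasurableSet (E w) := by
    intro w
    have hrw : E w = ⋃ i ∈ Set.Iio p, {ω : ℤ → 𝕏 | blk (i*k) k ω = w} := by
      ext ω; simp [hEdef]
    rw [hrw]
    exact MeasurableSet.biUnion (Set.to_countable _) fun i _ => measurableSet_blk _ k w
  have hEind_int : ∀ w, Integrable (Set.indicator (E w) fun _ => (1:ℝ)) μ :=
    fun w => (integrable_const 1).indicator (hE w)
  -- rewrite Dcount as a sum of indicators
  have hDre : ∀ ω, ((Dcount k n ω : ℕ) : ℝ) = ∑ w, Set.indicator (E w) (fun _ => (1:ℝ)) ω := by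
    intro ω
    have hset : {w : Fin k → 𝕏 | ∃ i < n / k, blk (i * k) k ω = w}
        = ↑(Finset.univ.filter fun w : Fin k → 𝕏 => ω ∈ E w) := by
      ext w
      simp [hEdef, hnk]
    rw [Dcount, hset, Set.ncard_coe_finset, Finset.card_filter]
    push_cast
    exact Finset.sum_congr rfl fun w _ => by simp [Set.indicator_apply]
  have hDint : ∫ ω, (Dcount k n ω : ℝ) ∂μ = ∑ w, (μ (E w)).toReal := by
    calc ∫ ω, (Dcount k n ω : ℝ) ∂μ
        = ∫ ω, ∑ w, Set.indicator (E w) (fun _ => (1:ℝ)) ω ∂μ :=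
          integral_congr_ae (ae_of_all _ hDre)
      _ = ∑ w, ∫ ω, Set.indicator (E w) (fun _ => (1:ℝ)) ω ∂μ :=
          integral_finset_sum _ fun w _ => hEind_int w
      _ = ∑ w, (μ (E w)).toReal := by
          refine Finset.sum_congr rfl fun w _ => ?_
          rw [integral_indicator (hE w), setIntegral_const]; simp [Measure.real]
  -- integrability of the min functions
  have hmin_int : ∀ w, Integrable (fun ω => min 1 ((p:ℝ) * g w ω)) μ := by
    intro w
    refine Integrable.mono (integrable_const (1:ℝ))
      ((measurable_const.min (measurable_const.mul (hgm w))).aestronglyMeasurable) ?_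
    filter_upwards [hg0] with ω h0
    rw [Real.norm_eq_abs, abs_le]
    constructor
    · have : (0:ℝ) ≤ min 1 ((p:ℝ) * g w ω) :=
        le_min zero_le_one (mul_nonneg hppos.le (h0 w))
      calc -‖(1:ℝ)‖ ≤ 0 := by simp
        _ ≤ _ := this
    · calc min 1 ((p:ℝ) * g w ω) ≤ 1 := min_le_left _ _
        _ ≤ ‖(1:ℝ)‖ := by simp
  -- key bound per word
  have hEbound : ∀ w, (μ (E w)).toReal ≤ ∫ ω, min 1 ((p:ℝ) * g w ω) ∂μ := by
    intro w
    have hBint : ∀ i : ℕ, Integrable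
        (Set.indicator {ω' : ℤ → 𝕏 | blk (i*k) k ω' = w} fun _ => (1:ℝ)) μ :=
      fun i => (integrable_const 1).indicator (measurableSet_blk _ k w)
    have hpt : ∀ ω, Set.indicator (E w) (fun _ => (1:ℝ)) ω ≤
        ∑ i ∈ Finset.range p, Set.indicator {ω' : ℤ → 𝕏 | blk (i*k) k ω' = w}
          (fun _ => (1:ℝ)) ω := by
      intro ω
      by_cases hω : ω ∈ E w
      · rw [Set.indicator_of_mem hω]
        obtain ⟨i, hi, hbi⟩ := hω
        have hmem : Set.indicator {ω' : ℤ → 𝕏 | blk (i*k) k ω' = w} (fun _ => (1:ℝ)) ω = 1 :=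
          Set.indicator_of_mem (show ω ∈ {ω' : ℤ → 𝕏 | blk (i*k) k ω' = w} from hbi) _
        calc (1:ℝ) = Set.indicator {ω' : ℤ → 𝕏 | blk (i*k) k ω' = w} (fun _ => (1:ℝ)) ω :=
              hmem.symm
          _ ≤ _ := Finset.single_le_sum
              (f := fun i : ℕ => Set.indicator {ω' : ℤ → 𝕏 | blk (i*k) k ω' = w}
                (fun _ => (1:ℝ)) ω)
              (fun j _ => Set.indicator_nonneg (fun _ _ => zero_le_one) _)
              (Finset.mem_range.mpr hi)
      · rw [Set.indicator_of_notMem hω]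
        exact Finset.sum_nonneg fun j _ => Set.indicator_nonneg (fun _ _ => zero_le_one) _
    have hc1 : (μ[Set.indicator (E w) fun _ => (1:ℝ)|MeasurableSpace.invariants shift])
        ≤ᵐ[μ] fun _ => (1:ℝ) := by
      have h := condExp_mono (m := MeasurableSpace.invariants (shift (𝕏 := 𝕏))) (μ := μ)
        (hEind_int w) (integrable_const (1:ℝ))
        (ae_of_all _ fun ω => Set.indicator_le_self' (fun _ _ => zero_le_one) ω)
      rwa [condExp_const hle] at h
    have hsum2 := condExp_finset_sum (μ := μ)
      (m := MeasurableSpace.invariants (shift (𝕏 := 𝕏)))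
      (s := Finset.range p)
      (f := fun i : ℕ => Set.indicator {ω' : ℤ → 𝕏 | blk (i*k) k ω' = w} fun _ => (1:ℝ))
      (fun i _ => hBint i)
    have hcompae : ∀ᵐ ω ∂μ, ∀ i : ℕ, i ∈ Finset.range p →
        (μ[Set.indicator {ω' : ℤ → 𝕏 | blk (i*k) k ω' = w}
          fun _ => (1:ℝ)|MeasurableSpace.invariants shift]) ω = g w ω := by
      refine ae_all_iff.mpr fun i => ?_
      exact (condexp_blk_shift hstat k w (i*k)).mono fun ω h _ => h
    have hc2 : (μ[Set.indicator (E w) fun _ => (1:ℝ)|MeasurableSpace.invariants shift])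
        ≤ᵐ[μ] fun ω => (p:ℝ) * g w ω := by
      have hfs : (fun a : ℤ → 𝕏 => ∑ i ∈ Finset.range p,
          Set.indicator {ω' : ℤ → 𝕏 | blk (i*k) k ω' = w} (fun _ => (1:ℝ)) a)
          = ∑ i ∈ Finset.range p, Set.indicator {ω' : ℤ → 𝕏 | blk (i*k) k ω' = w}
            fun _ => (1:ℝ) := by
        funext a; rw [Finset.sum_apply]
      have hmono := condExp_mono (m := MeasurableSpace.invariants (shift (𝕏 := 𝕏))) (μ := μ)
        (hEind_int w) (integrable_finset_sum _ fun i _ => hBint i) (ae_of_all _ hpt)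
      rw [hfs] at hmono
      filter_upwards [hmono, hsum2, hcompae] with ω hω1 hω2 hω3
      calc (μ[Set.indicator (E w) fun _ => (1:ℝ)|MeasurableSpace.invariants shift]) ω
          ≤ (μ[∑ i ∈ Finset.range p, Set.indicator {ω' : ℤ → 𝕏 | blk (i*k) k ω' = w}
              fun _ => (1:ℝ)|MeasurableSpace.invariants shift]) ω := hω1
        _ = ∑ i ∈ Finset.range p,
            (μ[Set.indicator {ω' : ℤ → 𝕏 | blk (i*k) k ω' = w}
              fun _ => (1:ℝ)|MeasurableSpace.invariants shift]) ω := by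
            rw [hω2, Finset.sum_apply]
        _ = ∑ _i ∈ Finset.range p, g w ω :=
            Finset.sum_congr rfl fun i hi => hω3 i hi
        _ = (p:ℝ) * g w ω := by rw [Finset.sum_const, Finset.card_range, nsmul_eq_mul]
    have hcmin : (μ[Set.indicator (E w) fun _ => (1:ℝ)|MeasurableSpace.invariants shift])
        ≤ᵐ[μ] fun ω => min 1 ((p:ℝ) * g w ω) := by
      filter_upwards [hc1, hc2] with ω ha hb
      exact le_min ha hb
    calc (μ (E w)).toReal
        = ∫ ω, Set.indicator (E w) (fun _ => (1:ℝ)) ω ∂μ := by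
          rw [integral_indicator (hE w), setIntegral_const]; simp [Measure.real]
      _ = ∫ ω, (μ[Set.indicator (E w) fun _ => (1:ℝ)|MeasurableSpace.invariants shift]) ω ∂μ :=
          (integral_condExp hle).symm
      _ ≤ ∫ ω, min 1 ((p:ℝ) * g w ω) ∂μ :=
          integral_mono_ae integrable_condExp (hmin_int w) hcmin
  -- the conditional-entropy integrand
  set ℓ : (ℤ → 𝕏) → ℝ := fun ω => -Real.logb 2 (g (blk 0 k ω) ω) with hldef
  have hcondH_eq : condH μ k = ∫ ω, ℓ ω ∂μ := rfl
  have hell_int : Integrable ℓ μ := integrable_ell k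
  have hgval_pos : ∀ᵐ ω ∂μ, 0 < g (blk 0 k ω) ω := by
    filter_upwards [hgpos] with ω hω
    exact hω _ rfl
  have hell0 : ∀ᵐ ω ∂μ, 0 ≤ ℓ ω := by
    filter_upwards [hg1, hgval_pos] with ω h1 h2
    rw [hldef]
    simp only [neg_nonneg]
    exact Real.logb_nonpos one_lt_two h2.le (h1 _)
  have hcondH0 : 0 ≤ condH μ k := by
    rw [hcondH_eq]; exact integral_nonneg_of_ae hell0
  set t := m * condH μ k with htdef
  have ht0 : 0 ≤ t := mul_nonneg hm0.le hcondH0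
  set c := (2:ℝ) ^ (-t) with hcdef
  have h2t : (0:ℝ) < (2:ℝ) ^ t := Real.rpow_pos_of_pos two_pos t
  have hcpos : (0:ℝ) < c := Real.rpow_pos_of_pos two_pos _
  set σ := sigmaFn (m * condH μ k - Real.logb 2 ((n:ℝ)/k)) with hσdef
  have hσeq : σ = min (1 / ((p:ℝ) * c)) 1 := by
    rw [hσdef, sigmaFn, hnkreal, ← htdef]
    congr 1
    rw [Real.rpow_sub two_pos, Real.rpow_logb two_pos (by norm_num) hppos, hcdef,
      Real.rpow_neg (by norm_num : (0:ℝ) ≤ 2)]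
    field_simp
  have hσ0 : 0 ≤ σ := by
    rw [hσeq]
    exact le_min (by positivity) zero_le_one
  have hσ1 : σ ≤ 1 := by rw [hσeq]; exact min_le_right _ _
  -- bad-mass function
  set Bfun : (ℤ → 𝕏) → ℝ :=
    fun ω => ∑ w ∈ Finset.univ.filter fun w => g w ω < c, g w ω with hBdef
  have hBfun_eq : Bfun = fun ω => ∑ w, if g w ω < c then g w ω else 0 := by
    funext ω
    show (∑ w ∈ Finset.univ.filter fun w => g w ω < c, g w ω) = _
    exact Finset.sum_filter _ _
  have hBterm_int : ∀ w, Integrable (fun ω => if g w ω < c then g w ω else 0) μ := by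
    intro w
    have hfeq : (fun ω => if g w ω < c then g w ω else 0)
        = Set.indicator {ω | g w ω < c} (g w) := by
      funext ω; rw [Set.indicator_apply]; rfl
    rw [hfeq]
    exact integrable_condExp.indicator (measurableSet_lt (hgm w) measurable_const)
  have hBfun_int : Integrable Bfun μ := by
    rw [hBfun_eq]; exact integrable_finset_sum _ fun w _ => hBterm_int w
  have hF_int : Integrable (fun ω => ∑ w, min 1 ((p:ℝ) * g w ω)) μ :=
    integrable_finset_sum _ fun w _ => hmin_int w
  have hRHS_int : Integrable (fun ω => (p:ℝ) * (σ + Bfun ω * (1-σ))) μ :=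
    (((integrable_const σ).add (hBfun_int.mul_const (1-σ))).const_mul _)
  have hptw : ∀ᵐ ω ∂μ, (∑ w, min 1 ((p:ℝ) * g w ω))
      ≤ (p:ℝ) * (σ + Bfun ω * (1 - σ)) := by
    filter_upwards [hg0, hgsum] with ω h0 h1
    have := sum_min_le_aux (fun w => g w ω) (p:ℝ) c hppos hcpos h0 h1
    rw [hσeq]
    exact this
  -- Markov: the bad mass has expectation at most 1/m
  set S : (Fin k → 𝕏) → Set (ℤ → 𝕏) := fun w => {ω | g w ω < c} with hSdef
  have hSI : ∀ w, MeasurableSet[MeasurableSpace.invariants (shift (𝕏 := 𝕏))] (S w) := by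
    intro w
    show MeasurableSet[MeasurableSpace.invariants (shift (𝕏 := 𝕏))] ((g w) ⁻¹' Set.Iio c)
    exact (hgsm w).measurable measurableSet_Iio
  have hSm : ∀ w, MeasurableSet (S w) := fun w => hle _ (hSI w)
  set uFun : (ℤ → 𝕏) → ℝ :=
    fun ω => ∑ w, Set.indicator (A w ∩ S w) (fun _ => (1:ℝ)) ω with hudef
  have hu_int : Integrable uFun μ :=
    integrable_finset_sum _ fun w _ => (integrable_const 1).indicator ((hA w).inter (hSm w))
  have hu_eq : ∀ ω, uFun ω = if g (blk 0 k ω) ω < c then 1 else 0 := by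
    intro ω
    have h : ∀ w : Fin k → 𝕏, Set.indicator (A w ∩ S w) (fun _ => (1:ℝ)) ω
        = if blk 0 k ω = w then (if g w ω < c then (1:ℝ) else 0) else 0 := by
      intro w
      rw [Set.indicator_apply]
      by_cases h1 : blk 0 k ω = w
      · by_cases h2 : g w ω < c
        · simp [hAdef, hSdef, h1, h2, Set.mem_inter_iff]
        · simp [hAdef, hSdef, h1, h2, Set.mem_inter_iff]
      · simp [hAdef, hSdef, h1, Set.mem_inter_iff]
    rw [hudef]
    simp only [h]
    rw [Finset.sum_ite_eq]
    simp
  have hBu : ∫ ω, Bfun ω ∂μ = ∫ ω, uFun ω ∂μ := by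
    rw [hBfun_eq, hudef, integral_finset_sum _ (fun w _ => hBterm_int w),
      integral_finset_sum _
        (fun w _ => (integrable_const (1:ℝ)).indicator ((hA w).inter (hSm w)))]
    refine Finset.sum_congr rfl fun w _ => ?_
    have hL : (fun ω => if g w ω < c then g w ω else 0) = Set.indicator (S w) (g w) := by
      funext ω; rw [Set.indicator_apply]; rfl
    have hsi : ∫ ω in S w, g w ω ∂μ
        = ∫ ω in S w, Set.indicator (A w) (fun _ => (1:ℝ)) ω ∂μ :=
      setIntegral_condExp hle (hind_int w) (hSI w)
    calc ∫ ω, (if g w ω < c then g w ω else 0) ∂μ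
        = ∫ ω in S w, g w ω ∂μ := by rw [hL, integral_indicator (hSm w)]
      _ = ∫ ω in S w, Set.indicator (A w) (fun _ => (1:ℝ)) ω ∂μ := hsi
      _ = (μ (A w ∩ S w)).toReal := setIntegral_indicator_one (hA w)
      _ = ∫ ω, Set.indicator (A w ∩ S w) (fun _ => (1:ℝ)) ω ∂μ := by
          rw [integral_indicator ((hA w).inter (hSm w)), setIntegral_const]; simp [Measure.real]
  have hu_le : ∫ ω, uFun ω ∂μ ≤ 1/m := by
    rcases eq_or_lt_of_le hcondH0 with hH0 | hHpos
    · -- degenerate case: zero conditional entropy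
      have hint0 : ∫ ω, ℓ ω ∂μ = 0 := by rw [← hcondH_eq, ← hH0]
      have hz : ℓ =ᵐ[μ] 0 := (integral_eq_zero_iff_of_nonneg_ae hell0 hell_int).mp hint0
      have hc1 : c = 1 := by
        rw [hcdef, htdef, ← hH0, mul_zero, neg_zero, Real.rpow_zero]
      have hzero : ∀ᵐ ω ∂μ, uFun ω = 0 := by
        filter_upwards [hz, hgval_pos] with ω hzω h2
        rw [hu_eq ω, hc1]
        have hlz : -Real.logb 2 (g (blk 0 k ω) ω) = 0 := hzω
        have hlog : Real.logb 2 (g (blk 0 k ω) ω) = 0 := by linarith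
        have hlx : Real.log (g (blk 0 k ω) ω) = 0 := by
          rw [Real.logb, div_eq_zero_iff] at hlog
          rcases hlog with h|h
          · exact h
          · exact absurd h (ne_of_gt log2_pos)
        have hval1 : g (blk 0 k ω) ω = 1 := by
          rcases Real.log_eq_zero.mp hlx with h|h|h
          · exact absurd h h2.ne'
          · exact h
          · linarith
        rw [hval1]
        simp
      have : ∫ ω, uFun ω ∂μ = 0 := by
        rw [integral_congr_ae hzero, integral_zero]
      rw [this]
      positivity
    · have htpos : 0 < t := by rw [htdef]; exact mul_pos hm0 hHpos
      have hmarkov : ∀ᵐ ω ∂μ, t * uFun ω ≤ ℓ ω := by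
        filter_upwards [hell0, hgval_pos] with ω h0 h2
        rw [hu_eq ω]
        by_cases hlt : g (blk 0 k ω) ω < c
        · rw [if_pos hlt, mul_one]
          have hlog : Real.logb 2 (g (blk 0 k ω) ω) < Real.logb 2 c :=
            Real.logb_lt_logb one_lt_two h2 hlt
          rw [hcdef, Real.logb_rpow two_pos (by norm_num)] at hlog
          have hlt2 : t < ℓ ω := by
            rw [hldef]
            simp only []
            linarith
          exact hlt2.le
        · rw [if_neg hlt, mul_zero]; exact h0
      have hint := integral_mono_ae (hu_int.const_mul t) hell_int hmarkov
      rw [integral_const_mul] at hint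
      have hkey : t * ∫ ω, uFun ω ∂μ ≤ condH μ k := by
        rw [hcondH_eq]; exact hint
      have hdiv : ∫ ω, uFun ω ∂μ ≤ condH μ k / t :=
        (le_div_iff₀ htpos).mpr (by linarith)
      have hcomp : condH μ k / t = 1/m := by
        rw [htdef]
        field_simp [hHpos.ne']
      rw [hcomp] at hdiv
      exact hdiv
  -- final assembly
  have hchain : ∫ ω, (Dcount k n ω : ℝ) ∂μ ≤ (p:ℝ) * (σ + (1/m) * (1 - σ)) := by
    calc ∫ ω, (Dcount k n ω : ℝ) ∂μ = ∑ w, (μ (E w)).toReal := hDint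
      _ ≤ ∑ w, ∫ ω, min 1 ((p:ℝ) * g w ω) ∂μ := Finset.sum_le_sum fun w _ => hEbound w
      _ = ∫ ω, ∑ w, min 1 ((p:ℝ) * g w ω) ∂μ :=
          (integral_finset_sum _ fun w _ => hmin_int w).symm
      _ ≤ ∫ ω, (p:ℝ) * (σ + Bfun ω * (1 - σ)) ∂μ :=
          integral_mono_ae hF_int hRHS_int hptw
      _ = (p:ℝ) * (σ + (∫ ω, Bfun ω ∂μ) * (1 - σ)) := by
          rw [integral_const_mul, integral_add (integrable_const σ) (hBfun_int.mul_const _),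
            integral_const, integral_mul_const]
          simp [measure_univ]
      _ ≤ (p:ℝ) * (σ + (1/m) * (1 - σ)) := by
          have h1σ : (0:ℝ) ≤ 1 - σ := by linarith
          have hmul : (∫ ω, Bfun ω ∂μ) * (1 - σ) ≤ (1/m) * (1 - σ) := by
            refine mul_le_mul_of_nonneg_right ?_ h1σ
            rw [hBu]; exact hu_le
          have := add_le_add (le_refl σ) hmul
          exact mul_le_mul_of_nonneg_left this hppos.le
  rw [hkn]
  calc ((p:ℝ))⁻¹ * ∫ ω, (Dcount k n ω : ℝ) ∂μ
      ≤ ((p:ℝ))⁻¹ * ((p:ℝ) * (σ + (1/m) * (1 - σ))) := by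
        refine mul_le_mul_of_nonneg_left hchain ?_
        positivity
    _ = σ + (1/m) * (1 - σ) := by
        rw [← mul_assoc, inv_mul_cancel₀ hppos.ne', one_mul]
    _ = 1 / m + (1 - 1 / m) * σ := by ring
end
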